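/- arXiv:2504.17835 — 4 statements merged into one kernel-verified Lean document; each statement's English description precedes it below -/
import Mathlib

section
/- For each k = 1,…,6, the image φ_{k,1}(𝔻) of the closed unit disk is a closed disk of radius (2√3−3)/3, and its center c_k satisfies |c_k| = (4√3−6)/3; i.e., there exists c_k ∈ ℂ with |c_k| = (4√3−6)/3 such that φ_{k,1}(𝔻) is the closed ball of center c_k and radius (2√3−3)/3. -/
open Complex Metric Set
open scoped ENNReal

noncomputable section

/-- λ = √3 -/
def lam : ℝ := Real.sqrt 3

/-- The Möbius map f(z) = ((λ−1)z+1)/(−z+λ+1). -/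
def apolF : ℂ → ℂ := fun z => (((lam : ℂ) - 1) * z + 1) / (-z + (lam : ℂ) + 1)

/-- Rotation by angle θ. -/
def Rot (θ : ℝ) : ℂ → ℂ := fun z => Complex.exp ((θ : ℂ) * Complex.I) * z

/-- θ_k = (−1)^k · 2π/3 -/
def thetaA (k : ℕ) : ℝ := (-1 : ℝ) ^ k * (2 * Real.pi / 3)

/-- θ'_k = 2πk/3 -/
def thetaB (k : ℕ) : ℝ := 2 * Real.pi * k / 3

/-- The Apollonian generators φ_{k,n} = R_{θ'_k} ∘ f^n ∘ R_{θ_k} ∘ f. -/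
def phi (k n : ℕ) : ℂ → ℂ := Rot (thetaB k) ∘ (apolF^[n]) ∘ Rot (thetaA k) ∘ apolF

/-- The closed unit disk 𝔻. -/
def unitD : Set ℂ := Metric.closedBall (0 : ℂ) 1


private lemma mob_denom_ne (c d z : ℂ) (h : ‖c‖ < ‖d‖)
    (hz : ‖z‖ ≤ 1) : c * z + d ≠ 0 := by
  intro h0
  have hd : d = -(c*z) := by linear_combination h0
  have : ‖d‖ ≤ ‖c‖ := by
    rw [hd, norm_neg, norm_mul]
    calc ‖c‖ * ‖z‖ ≤ ‖c‖ * 1 :=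
      mul_le_mul_of_nonneg_left hz (norm_nonneg c)
    _ = ‖c‖ := mul_one _
  linarith

private lemma normSq_diff (c d z : ℂ) :
    Complex.normSq ((starRingEnd ℂ) d * z + (starRingEnd ℂ) c) - Complex.normSq (c*z+d)
      = (Complex.normSq d - Complex.normSq c) * (Complex.normSq z - 1) := by
  have key : ((Complex.normSq ((starRingEnd ℂ) d * z + (starRingEnd ℂ) c) : ℂ))
      - (Complex.normSq (c*z+d) : ℂ)
      = ((Complex.normSq d : ℂ) - Complex.normSq c) * ((Complex.normSq z : ℂ) - 1) := by
    rw [← Complex.mul_conj, ← Complex.mul_conj, ← Complex.mul_conj, ← Complex.mul_conj,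
      ← Complex.mul_conj]
    simp only [map_add, map_mul, Complex.conj_conj]
    ring
  exact_mod_cast key

private lemma mob_identity (a b c d z : ℂ) (s : ℝ)
    (hs : (s:ℂ) = d * (starRingEnd ℂ) d - c * (starRingEnd ℂ) c) (hs0 : s ≠ 0)
    (hz : c*z + d ≠ 0) :
    (a*z+b)/(c*z+d) - (b * (starRingEnd ℂ) d - a * (starRingEnd ℂ) c)/(s:ℂ)
      = (a*d - b*c) * ((starRingEnd ℂ) d * z + (starRingEnd ℂ) c) / ((c*z+d) * (s:ℂ)) := by
  have hsC : (s:ℂ) ≠ 0 := by exact_mod_cast hs0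
  rw [div_sub_div _ _ hz hsC]; congr 1
  linear_combination (a*z+b) * hs

private lemma mob_mem_iff (a b c d z : ℂ) (s : ℝ)
    (hs : (s:ℂ) = d * (starRingEnd ℂ) d - c * (starRingEnd ℂ) c) (hs0 : 0 < s)
    (hdet : a*d - b*c ≠ 0) (hz : c*z + d ≠ 0) :
    ‖(a*z+b)/(c*z+d) - (b * (starRingEnd ℂ) d - a * (starRingEnd ℂ) c)/(s:ℂ)‖
      ≤ ‖a*d - b*c‖ / s ↔ ‖z‖ ≤ 1 := by
  rw [mob_identity a b c d z s hs (ne_of_gt hs0) hz]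
  rw [norm_div, norm_mul, norm_mul]
  have habs_s : ‖(s:ℂ)‖ = s := by
    rw [Complex.norm_real, Real.norm_eq_abs, abs_of_pos hs0]
  rw [habs_s]
  have hdet0 : 0 < ‖a*d - b*c‖ := by
    exact norm_pos_iff.mpr hdet
  have hcz0 : 0 < ‖c*z+d‖ := by
    exact norm_pos_iff.mpr hz
  have hp : 0 < ‖a*d-b*c‖ * s := mul_pos hdet0 hs0
  have hsn : Complex.normSq d - Complex.normSq c = s := by
    have : ((Complex.normSq d : ℂ)) - Complex.normSq c = (s:ℂ) := by
      rw [hs, Complex.mul_conj, Complex.mul_conj]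
    exact_mod_cast this
  have hdiff := normSq_diff c d z
  rw [hsn] at hdiff
  set t := ‖(starRingEnd ℂ) d * z + (starRingEnd ℂ) c‖ with ht
  set y := ‖c*z+d‖ with hy
  have ht0 : 0 ≤ t := norm_nonneg _
  have hy0 : 0 ≤ y := norm_nonneg _
  have hsqt : t^2 = Complex.normSq ((starRingEnd ℂ) d * z + (starRingEnd ℂ) c) :=
    Complex.sq_norm _
  have hsqy : y^2 = Complex.normSq (c*z+d) := Complex.sq_norm _
  constructor
  · intro h
    rw [div_le_div_iff₀ (by positivity) (by positivity)] at h
    have h1 : t ≤ y := by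
      by_contra hlt
      push_neg at hlt
      nlinarith [mul_lt_mul_of_pos_left hlt hp]
    have h2 : Complex.normSq z ≤ 1 := by nlinarith
    nlinarith [Complex.sq_norm z, norm_nonneg z]
  · intro h
    have h2 : Complex.normSq z ≤ 1 := by
      rw [← Complex.sq_norm]; nlinarith [norm_nonneg z]
    have h1 : t ≤ y := by nlinarith
    rw [div_le_div_iff₀ (by positivity) (by positivity)]
    nlinarith [mul_le_mul_of_nonneg_left h1 (le_of_lt hp)]

lemma mob_image (a b c d : ℂ) (s : ℝ)
    (hs : (s:ℂ) = d * (starRingEnd ℂ) d - c * (starRingEnd ℂ) c) (hs0 : 0 < s)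
    (hdet : a*d - b*c ≠ 0) (hcd : ‖c‖ < ‖d‖) :
    (fun z => (a*z+b)/(c*z+d)) '' Metric.closedBall 0 1
      = Metric.closedBall ((b * (starRingEnd ℂ) d - a * (starRingEnd ℂ) c)/(s:ℂ))
          (‖a*d - b*c‖ / s) := by
  have hsC : (s:ℂ) ≠ 0 := by exact_mod_cast (ne_of_gt hs0)
  ext w
  simp only [mem_image, Metric.mem_closedBall, Complex.dist_eq, sub_zero]
  constructor
  · rintro ⟨z, hz, rfl⟩
    exact (mob_mem_iff a b c d z s hs hs0 hdet (mob_denom_ne c d z hcd hz)).2 hz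
  · intro hw
    have haw : a - c * w ≠ 0 := by
      rcases eq_or_ne c 0 with hc | hc
      · have ha : a ≠ 0 := by
          intro h0; apply hdet; rw [hc, h0]; ring
        simpa [hc] using ha
      · intro h0
        have hwv : w = a / c := by field_simp; linear_combination -h0
        have key : w - (b * (starRingEnd ℂ) d - a * (starRingEnd ℂ) c)/(s:ℂ)
            = (starRingEnd ℂ) d * (a*d - b*c) / (c * s) := by
          rw [hwv]; field_simp; linear_combination a * hs
        have habs : ‖w - (b * (starRingEnd ℂ) d - a * (starRingEnd ℂ) c)/(s:ℂ)‖
            = ‖d‖ * ‖a*d-b*c‖ / (‖c‖ * s) := by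
          rw [key]
          simp only [norm_div, norm_mul, Complex.norm_conj, Complex.norm_real, Real.norm_eq_abs]
          rw [abs_of_pos hs0]
        rw [habs] at hw
        have hc0 : 0 < ‖c‖ := by exact norm_pos_iff.mpr hc
        have hdet0 : 0 < ‖a*d - b*c‖ := by
          exact norm_pos_iff.mpr hdet
        rw [div_le_div_iff₀ (by positivity) hs0] at hw
        nlinarith [mul_pos hdet0 hs0]
    have hcz : c * ((d*w - b)/(a - c*w)) + d = (a*d - b*c)/(a - c*w) := by
      field_simp; ring
    have hnum : a * ((d*w - b)/(a - c*w)) + b = w * (a*d - b*c)/(a - c*w) := by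
      rw [mul_div_assoc', div_add' _ _ _ haw]; congr 1; ring
    have hTz : (a * ((d*w - b)/(a - c*w)) + b) / (c * ((d*w - b)/(a - c*w)) + d) = w := by
      rw [hcz, hnum, div_eq_iff (div_ne_zero hdet haw)]; ring
    refine ⟨(d*w - b)/(a - c*w), ?_, hTz⟩
    have hczn : c * ((d*w - b)/(a - c*w)) + d ≠ 0 := by
      rw [hcz]; exact div_ne_zero hdet haw
    exact (mob_mem_iff a b c d _ s hs hs0 hdet hczn).1 (by rw [hTz]; exact hw)

private lemma mul_image_closedBall (ζ : ℂ) (hζ : ‖ζ‖ = 1) (c : ℂ) (r : ℝ) :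
    (fun z => ζ * z) '' Metric.closedBall c r = Metric.closedBall (ζ*c) r := by
  have h1 : ζ * (starRingEnd ℂ) ζ = 1 := by
    rw [Complex.mul_conj, Complex.normSq_eq_norm_sq, hζ]; norm_num
  ext w
  simp only [mem_image, Metric.mem_closedBall, Complex.dist_eq]
  constructor
  · rintro ⟨u, hu, rfl⟩
    have : ζ*u - ζ*c = ζ*(u - c) := by ring
    rw [this, norm_mul, hζ, one_mul]; exact hu
  · intro hw
    refine ⟨(starRingEnd ℂ) ζ * w, ?_, by linear_combination w * h1⟩
    have : (starRingEnd ℂ) ζ * w - c = (starRingEnd ℂ) ζ * (w - ζ*c) := by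
      linear_combination c * h1
    rw [this, norm_mul, Complex.norm_conj, hζ, one_mul]; exact hw


/-- φ_{k,1}(𝔻) is a closed disk of radius (2√3−3)/3 whose center c_k satisfies
|c_k| = (4√3−6)/3. -/
theorem apollonian_first_disk (k : ℕ) (hk1 : 1 ≤ k) (hk6 : k ≤ 6) :
    ∃ c : ℂ, ‖c‖ = (4 * Real.sqrt 3 - 6) / 3 ∧
      phi k 1 '' unitD = Metric.closedBall c ((2 * Real.sqrt 3 - 3) / 3) := by
  have h3 : Real.sqrt 3 ^ 2 = 3 := Real.sq_sqrt (by norm_num)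
  have hl0 : (0:ℝ) ≤ lam := Real.sqrt_nonneg 3
  have hl1 : (1:ℝ) < lam := by rw [lam]; nlinarith [Real.sqrt_nonneg 3]
  have hl : (lam:ℂ)^2 = 3 := by
    rw [lam, ← Complex.ofReal_pow, h3]; norm_num
  set ω : ℂ := Complex.exp ((thetaA k : ℂ) * Complex.I) with hωdef
  set ζ : ℂ := Complex.exp ((thetaB k : ℂ) * Complex.I) with hζdef
  have hω1 : ‖ω‖ = 1 := Complex.norm_exp_ofReal_mul_I _
  have hζ1 : ‖ζ‖ = 1 := Complex.norm_exp_ofReal_mul_I _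
  have hωre : ω.re = -(1/2) := by
    rw [hωdef, Complex.exp_ofReal_mul_I_re, thetaA]
    have hcos : Real.cos (2*Real.pi/3) = -(1/2) := by
      have h : 2*Real.pi/3 = Real.pi - Real.pi/3 := by ring
      rw [h, Real.cos_pi_sub, Real.cos_pi_div_three]
    rcases Nat.even_or_odd k with he | ho
    · rw [he.neg_one_pow, one_mul]; exact hcos
    · rw [ho.neg_one_pow, neg_one_mul, Real.cos_neg]; exact hcos
  have hmc : ω * (starRingEnd ℂ) ω = 1 := by
    rw [Complex.mul_conj, Complex.normSq_eq_norm_sq, hω1]; norm_num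
  have hac : (starRingEnd ℂ) ω = -1 - ω := by
    have h := Complex.add_conj ω
    rw [hωre] at h
    push_cast at h
    linear_combination h
  have hωq : ω^2 + ω + 1 = 0 := by
    rw [hac] at hmc; linear_combination -hmc
  set A : ℂ := ((lam:ℂ)-1)^2 * ω - 1 with hA
  set B : ℂ := ((lam:ℂ)-1) * ω + ((lam:ℂ)+1) with hB
  set C : ℂ := -(((lam:ℂ)-1) * ω) - ((lam:ℂ)+1) with hC
  set D : ℂ := -ω + ((lam:ℂ)+1)^2 with hD
  have hcA : (starRingEnd ℂ) A = ((lam:ℂ)-1)^2 * (-1-ω) - 1 := by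
    rw [hA]; simp [map_sub, map_add, map_mul, map_pow, Complex.conj_ofReal, hac]
  have hcB : (starRingEnd ℂ) B = ((lam:ℂ)-1) * (-1-ω) + ((lam:ℂ)+1) := by
    rw [hB]; simp [map_sub, map_add, map_mul, Complex.conj_ofReal, hac]
  have hcC : (starRingEnd ℂ) C = -(((lam:ℂ)-1) * (-1-ω)) - ((lam:ℂ)+1) := by
    rw [hC]; simp [map_sub, map_add, map_mul, map_neg, Complex.conj_ofReal, hac]
  have hcD : (starRingEnd ℂ) D = -(-1-ω) + ((lam:ℂ)+1)^2 := by
    rw [hD]; simp [map_add, map_neg, map_pow, Complex.conj_ofReal, hac]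
  have hdetv : A*D - B*C = 9*ω := by
    rw [hA, hB, hC, hD]
    linear_combination (3*ω + ω*(lam:ℂ)^2) * hl
  have hdetne : A*D - B*C ≠ 0 := by
    rw [hdetv]
    exact mul_ne_zero (by norm_num) (by rw [hωdef]; exact Complex.exp_ne_zero _)
  have habsdet : ‖A*D - B*C‖ = 9 := by
    rw [hdetv, norm_mul, hω1, mul_one]; norm_num
  have hC6 : C * (starRingEnd ℂ) C = 6 := by
    rw [hcC, hC]
    linear_combination ((-1) + 2*(lam:ℂ) + (-1)*(lam:ℂ)^2) * hωq + hl
  have hD33 : D * (starRingEnd ℂ) D = ((33 + 18*lam : ℝ) : ℂ) := by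
    rw [hcD, hD]
    push_cast
    linear_combination (-1 : ℂ) * hωq + (10 + 4*(lam:ℂ) + (lam:ℂ)^2) * hl
  set X : ℂ := B * (starRingEnd ℂ) D - A * (starRingEnd ℂ) C with hXdef
  have hX : X * (starRingEnd ℂ) X = 324 := by
    have hcX : (starRingEnd ℂ) X = (starRingEnd ℂ) B * D - (starRingEnd ℂ) A * C := by
      rw [hXdef]; simp [map_sub, map_mul, Complex.conj_conj]
    rw [hXdef, hcX, hcA, hcB, hcC, hcD, hA, hB, hC, hD]
    linear_combination ((-20)*(lam:ℂ)^2 + 24*(lam:ℂ)^3 + (-3)*(lam:ℂ)^4 + (-5)*(lam:ℂ)^6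
        + ω*(4*(lam:ℂ)^2 + (-12)*(lam:ℂ)^3 + 13*(lam:ℂ)^4 + (-6)*(lam:ℂ)^5 + (lam:ℂ)^6)
        + ω^2*(4*(lam:ℂ)^2 + (-12)*(lam:ℂ)^3 + 13*(lam:ℂ)^4 + (-6)*(lam:ℂ)^5 + (lam:ℂ)^6)) * hωq
      + (108 + 24*(lam:ℂ)^2 + 4*(lam:ℂ)^4) * hl
  -- absolute values and real quantities
  have hnC : Complex.normSq C = 6 := by
    have h : ((Complex.normSq C : ℝ) : ℂ) = ((6:ℝ):ℂ) := by
      rw [← Complex.mul_conj, hC6]; norm_num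
    exact_mod_cast h
  have hnD : Complex.normSq D = 33 + 18*lam := by
    have h : ((Complex.normSq D : ℝ) : ℂ) = ((33 + 18*lam : ℝ):ℂ) := by
      rw [← Complex.mul_conj, hD33]
    exact_mod_cast h
  have hnX : Complex.normSq X = 324 := by
    have h : ((Complex.normSq X : ℝ) : ℂ) = ((324:ℝ):ℂ) := by
      rw [← Complex.mul_conj, hX]; norm_num
    exact_mod_cast h
  have habsX : ‖X‖ = 18 := by
    rw [Complex.norm_def, hnX, show (324:ℝ) = 18^2 by norm_num, Real.sqrt_sq (by norm_num)]
  have hcd : ‖C‖ < ‖D‖ := by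
    nlinarith [Complex.sq_norm C, Complex.sq_norm D, norm_nonneg C, norm_nonneg D,
      hnC, hnD]
  have hs0 : (0:ℝ) < 27 + 18*lam := by linarith
  have hs : ((27 + 18*lam : ℝ) : ℂ) = D * (starRingEnd ℂ) D - C * (starRingEnd ℂ) C := by
    rw [hD33, hC6]; push_cast; ring
  have himg := mob_image A B C D (27 + 18*lam) hs hs0 hdetne hcd
  -- pointwise description of phi k 1 on the disk
  have hphi : ∀ z ∈ unitD, phi k 1 z = ζ * ((A*z+B)/(C*z+D)) := by
    intro z hz
    have hz1 : ‖z‖ ≤ 1 := by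
      simpa [unitD, Complex.dist_eq] using hz
    have hM : -z + (lam:ℂ) + 1 ≠ 0 := by
      intro h0
      have hzv : z = (lam:ℂ) + 1 := by linear_combination -h0
      have : ‖z‖ = lam + 1 := by
        rw [hzv, show ((lam:ℂ)+1) = ((lam+1 : ℝ):ℂ) by push_cast; ring,
          Complex.norm_real, Real.norm_eq_abs, abs_of_pos (by linarith)]
      linarith
    set N : ℂ := ((lam:ℂ)-1)*z + 1 with hN
    set M : ℂ := -z + (lam:ℂ) + 1 with hM'
    have hfz : apolF z = N / M := rfl
    have hCD : C*z + D ≠ 0 := mob_denom_ne C D z hcd hz1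
    have hden : -(ω*(N/M)) + (lam:ℂ) + 1 = (C*z+D)/M := by
      have hNM : N / M * M = N := div_mul_cancel₀ N hM
      rw [eq_div_iff hM, hC, hD]
      linear_combination (-ω) * hNM + (-ω) * hN + ((lam:ℂ)+1) * hM'
    have hnum : ((lam:ℂ)-1)*(ω*(N/M)) + 1 = (A*z+B)/M := by
      have hNM : N / M * M = N := div_mul_cancel₀ N hM
      rw [eq_div_iff hM, hA, hB]
      linear_combination ((lam:ℂ)-1)*ω * hNM + ((lam:ℂ)-1)*ω * hN + hM'
    have hcomp : apolF (ω * apolF z) = (A*z+B)/(C*z+D) := by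
      rw [hfz]
      show (((lam:ℂ)-1)*(ω*(N/M)) + 1) / (-(ω*(N/M)) + (lam:ℂ) + 1) = (A*z+B)/(C*z+D)
      rw [hden, hnum]
      field_simp
    calc phi k 1 z = ζ * apolF (ω * apolF z) := by
          simp only [phi, Function.comp_apply, Function.iterate_one, Rot, hωdef, hζdef]
      _ = ζ * ((A*z+B)/(C*z+D)) := by rw [hcomp]
  -- assemble
  have himg2 : phi k 1 '' unitD = Metric.closedBall (ζ * (X / ((27+18*lam : ℝ):ℂ)))
      (‖A*D - B*C‖ / (27 + 18*lam)) := by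
    rw [Set.image_congr hphi]
    have : (fun z => ζ * ((A*z+B)/(C*z+D))) '' unitD
        = (fun w => ζ*w) '' ((fun z => (A*z+B)/(C*z+D)) '' unitD) := by
      rw [Set.image_image]
    rw [this, show unitD = Metric.closedBall (0:ℂ) 1 from rfl, himg, ← hXdef,
      mul_image_closedBall ζ hζ1]
  have hrad : ‖A*D - B*C‖ / (27 + 18*lam) = (2 * Real.sqrt 3 - 3) / 3 := by
    rw [habsdet, lam, div_eq_div_iff (by rw [← lam]; exact ne_of_gt hs0) (by norm_num)]
    linear_combination (-36 : ℝ) * h3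
  have habsc : ‖ζ * (X / ((27+18*lam : ℝ):ℂ))‖ = (4 * Real.sqrt 3 - 6) / 3 := by
    rw [norm_mul, hζ1, one_mul, norm_div, habsX, Complex.norm_real, Real.norm_eq_abs, abs_of_pos hs0]
    rw [lam, div_eq_div_iff (by rw [← lam]; exact ne_of_gt hs0) (by norm_num)]
    linear_combination (-72 : ℝ) * h3
  exact ⟨ζ * (X / ((27+18*lam : ℝ):ℂ)), habsc, by rw [himg2, hrad]⟩

end
end

section
/- For each k = 1,…,6, the image φ_{k,2}(𝔻) of the closed unit disk is a closed disk of radius (14√3−15)/121; i.e., there exists c ∈ ℂ such that φ_{k,2}(𝔻) is the closed ball of center c and radius (14√3−15)/121. -/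
open Complex Metric Set
open scoped ENNReal

noncomputable section

open ComplexConjugate in
lemma apol_key_identity (a b c d w : ℂ) :
    (d * conj d - c * conj c) *
        ((d * w - b) * conj (d * w - b) - (a - c * w) * conj (a - c * w)) =
      ((d * conj d - c * conj c) * w - (b * conj d - a * conj c)) *
          conj ((d * conj d - c * conj c) * w - (b * conj d - a * conj c)) -
        (a * d - b * c) * conj (a * d - b * c) := by
  simp only [map_mul, map_sub, map_add, Complex.conj_conj]
  ring

open ComplexConjugate in
lemma apol_moebius_image (a b c d : ℂ) (hdet : a * d - b * c ≠ 0)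
    (hcd : ‖c‖ < ‖d‖) :
    (fun z => (a * z + b) / (c * z + d)) '' Metric.closedBall 0 1 =
      Metric.closedBall
        ((b * conj d - a * conj c) / ((((‖d‖) ^ 2 - (‖c‖) ^ 2 : ℝ)) : ℂ))
        (‖a * d - b * c‖ / ((‖d‖) ^ 2 - (‖c‖) ^ 2)) := by
  have hK : (0:ℝ) < (‖d‖) ^ 2 - (‖c‖) ^ 2 := by
    have h0 : 0 ≤ ‖c‖ := norm_nonneg c
    nlinarith
  set K : ℝ := (‖d‖) ^ 2 - (‖c‖) ^ 2 with hKdef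
  have hKne : (K : ℂ) ≠ 0 := by
    exact_mod_cast ne_of_gt (by exact_mod_cast hK : (0:ℝ) < K)
  have hKc : (K : ℂ) = d * conj d - c * conj c := by
    rw [hKdef, Complex.sq_norm, Complex.sq_norm, Complex.ofReal_sub,
      ← Complex.mul_conj, ← Complex.mul_conj]
  have hid : ∀ w : ℂ,
      K * (normSq (d * w - b) - normSq (a - c * w)) =
        normSq ((K : ℂ) * w - (b * conj d - a * conj c)) - normSq (a * d - b * c) := by
    intro w
    have h := apol_key_identity a b c d w
    rw [← hKc] at h
    rw [Complex.mul_conj, Complex.mul_conj, Complex.mul_conj, Complex.mul_conj] at h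
    exact_mod_cast h
  have hmem : ∀ w : ℂ,
      w ∈ Metric.closedBall
          ((b * conj d - a * conj c) / ((K : ℝ) : ℂ))
          (‖a * d - b * c‖ / K) ↔
        normSq ((K : ℂ) * w - (b * conj d - a * conj c)) ≤ normSq (a * d - b * c) := by
    intro w
    rw [Metric.mem_closedBall, Complex.dist_eq]
    have hw : w - (b * conj d - a * conj c) / ((K : ℝ) : ℂ) =
        ((K : ℂ) * w - (b * conj d - a * conj c)) / ((K : ℝ) : ℂ) := by
      field_simp
    rw [hw, norm_div, Complex.norm_real, Real.norm_eq_abs, _root_.abs_of_pos hK,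
      div_le_div_iff_of_pos_right hK]
    rw [Complex.norm_def, Complex.norm_def]
    constructor
    · intro h
      nlinarith [Real.sq_sqrt (normSq_nonneg ((K : ℂ) * w - (b * conj d - a * conj c))),
        Real.sq_sqrt (normSq_nonneg (a * d - b * c)),
        Real.sqrt_nonneg (normSq ((K : ℂ) * w - (b * conj d - a * conj c))),
        Real.sqrt_nonneg (normSq (a * d - b * c)), h]
    · intro h
      exact Real.sqrt_le_sqrt h
  ext w
  constructor
  · rintro ⟨z, hz, rfl⟩
    have hz1 : ‖z‖ ≤ 1 := by
      simpa [Complex.dist_eq] using (Metric.mem_closedBall.mp hz)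
    have hden : c * z + d ≠ 0 := by
      intro h
      have h1 : ‖c * z‖ ≤ ‖c‖ := by
        rw [norm_mul]
        calc ‖c‖ * ‖z‖ ≤ ‖c‖ * 1 :=
              mul_le_mul_of_nonneg_left hz1 (norm_nonneg c)
          _ = ‖c‖ := mul_one _
      have h2 : c * z = -d := by linear_combination h
      rw [h2, norm_neg] at h1
      exact absurd (lt_of_lt_of_le hcd h1) (lt_irrefl _)
    set w := (a * z + b) / (c * z + d) with hwdef
    have h1 : d * w - b = (a * d - b * c) * z / (c * z + d) := by
      rw [hwdef, eq_div_iff hden, sub_mul, mul_assoc, div_mul_cancel₀ _ hden]; ring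
    have h2 : a - c * w = (a * d - b * c) / (c * z + d) := by
      rw [hwdef, eq_div_iff hden, sub_mul, mul_assoc, div_mul_cancel₀ _ hden]; ring
    have h3 : ‖d * w - b‖ ≤ ‖a - c * w‖ := by
      rw [h1, h2, norm_div, norm_div, norm_mul]
      have hXpos : 0 < ‖c * z + d‖ := norm_pos_iff.mpr hden
      rw [div_le_div_iff₀ hXpos hXpos]
      nlinarith [mul_nonneg (mul_nonneg (norm_nonneg (a * d - b * c)) hXpos.le)
        (sub_nonneg.mpr hz1)]
    have h4 : normSq (d * w - b) ≤ normSq (a - c * w) := by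
      rw [← Complex.sq_norm, ← Complex.sq_norm]
      exact pow_le_pow_left₀ (norm_nonneg _) h3 2
    rw [hmem w]
    have h5 := hid w
    nlinarith [h5, h4, hK]
  · intro hw
    have hW : normSq ((K : ℂ) * w - (b * conj d - a * conj c)) ≤ normSq (a * d - b * c) :=
      (hmem w).mp hw
    have hacw : a - c * w ≠ 0 := by
      intro h
      have ha : a = c * w := by linear_combination h
      have he : a * d - b * c = c * (d * w - b) := by rw [ha]; ring
      have ht : (K : ℂ) * w - (b * conj d - a * conj c) = conj d * (d * w - b) := by
        rw [hKc, ha]; ring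
      have hdwb : d * w - b ≠ 0 := by
        intro h0
        rw [h0, mul_zero] at he
        exact hdet he
      rw [he, ht, normSq_mul, normSq_mul, normSq_conj] at hW
      have hpos : 0 < normSq (d * w - b) := normSq_pos.mpr hdwb
      have hle : normSq d ≤ normSq c := le_of_mul_le_mul_right hW hpos
      have hlt : normSq c < normSq d := by
        rw [← Complex.sq_norm, ← Complex.sq_norm]
        have h0 : 0 ≤ ‖c‖ := norm_nonneg c
        nlinarith
      exact absurd hle (not_le.mpr hlt)
    refine ⟨(d * w - b) / (a - c * w), ?_, ?_⟩
    · have h4 : normSq (d * w - b) ≤ normSq (a - c * w) := by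
        have h5 := hid w
        nlinarith [hW, hK]
      have h6 : ‖d * w - b‖ ≤ ‖a - c * w‖ := by
        rw [Complex.norm_def, Complex.norm_def]
        exact Real.sqrt_le_sqrt h4
      rw [Metric.mem_closedBall, dist_zero_right, norm_div]
      rw [div_le_one (norm_pos_iff.mpr hacw)]
      exact h6
    · show (a * ((d * w - b) / (a - c * w)) + b) / (c * ((d * w - b) / (a - c * w)) + d) = w
      have hden2 : c * ((d * w - b) / (a - c * w)) + d = (a * d - b * c) / (a - c * w) := by
        field_simp
        ring
      rw [hden2, div_eq_iff (div_ne_zero hdet hacw)]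
      rw [mul_div_assoc', div_add' _ _ _ hacw, mul_div_assoc', div_left_inj' hacw]
      ring

open ComplexConjugate in
/-- φ_{k,2}(𝔻) is a closed disk of radius (14√3−15)/121. -/
theorem apollonian_second_disk (k : ℕ) (hk1 : 1 ≤ k) (hk6 : k ≤ 6) :
    ∃ c : ℂ, phi k 2 '' unitD = Metric.closedBall c ((14 * Real.sqrt 3 - 15) / 121) := by
  have hs2 : lam ^ 2 = 3 := Real.sq_sqrt (by norm_num)
  have hs1 : (1 : ℝ) ≤ lam := by
    rw [lam, show (1:ℝ) = Real.sqrt 1 by simp]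
    exact Real.sqrt_le_sqrt (by norm_num)
  have hs2c : ((lam : ℝ) : ℂ) ^ 2 = 3 := by
    rw [← Complex.ofReal_pow, hs2]; norm_num
  set ω : ℂ := Complex.exp ((thetaA k : ℂ) * Complex.I) with hω
  set u : ℂ := Complex.exp ((thetaB k : ℂ) * Complex.I) with hu
  have hωabs : ‖ω‖ = 1 := Complex.norm_exp_ofReal_mul_I _
  have huabs : ‖u‖ = 1 := Complex.norm_exp_ofReal_mul_I _
  have hω2 : ω ^ 2 + ω + 1 = 0 := by
    have hval : ω = ((Real.cos (thetaA k) : ℝ) : ℂ) + ((Real.sin (thetaA k) : ℝ) : ℂ) * Complex.I := by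
      rw [hω, Complex.exp_mul_I, Complex.ofReal_cos, Complex.ofReal_sin]
    rcases Nat.even_or_odd k with he | ho
    · have hθ : thetaA k = Real.pi - Real.pi / 3 := by
        rw [thetaA, he.neg_one_pow]; ring
      have hcos : Real.cos (thetaA k) = -(1/2) := by
        rw [hθ, Real.cos_pi_sub, Real.cos_pi_div_three]
      have hsin : Real.sin (thetaA k) = Real.sqrt 3 / 2 := by
        rw [hθ, Real.sin_pi_sub, Real.sin_pi_div_three]
      rw [hval, hcos, hsin, show Real.sqrt 3 = lam from rfl]
      push_cast
      linear_combination (Complex.I ^ 2 / 4) * hs2c + (3 / 4) * Complex.I_sq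
    · have hθ : thetaA k = -(Real.pi - Real.pi / 3) := by
        rw [thetaA, ho.neg_one_pow]; ring
      have hcos : Real.cos (thetaA k) = -(1/2) := by
        rw [hθ, Real.cos_neg, Real.cos_pi_sub, Real.cos_pi_div_three]
      have hsin : Real.sin (thetaA k) = -(Real.sqrt 3 / 2) := by
        rw [hθ, Real.sin_neg, Real.sin_pi_sub, Real.sin_pi_div_three]
      rw [hval, hcos, hsin, show Real.sqrt 3 = lam from rfl]
      push_cast
      linear_combination (Complex.I ^ 2 / 4) * hs2c + (3 / 4) * Complex.I_sq
  have hωne : ω ≠ 0 := Complex.exp_ne_zero _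
  have hωconj : conj ω = -1 - ω := by
    have h1 : ω * conj ω = 1 := by
      rw [Complex.mul_conj, ← Complex.sq_norm, hωabs]; norm_num
    have h2 : ω * (conj ω - (-1 - ω)) = 0 := by
      linear_combination h1 + hω2
    rcases mul_eq_zero.mp h2 with h | h
    · exact absurd h hωne
    · linear_combination h
  set A : ℂ := (((lam : ℝ) : ℂ) - 1) * ((((lam : ℝ) : ℂ) - 1) ^ 2 * ω - 1) +
      (-(((lam : ℝ) : ℂ) - 1) * ω - (((lam : ℝ) : ℂ) + 1)) with hA
  set B : ℂ := (((lam : ℝ) : ℂ) - 1) * ((((lam : ℝ) : ℂ) - 1) * ω + ((lam : ℝ) : ℂ) + 1) +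
      (-ω + (((lam : ℝ) : ℂ) + 1) ^ 2) with hB
  set C : ℂ := -((((lam : ℝ) : ℂ) - 1) ^ 2 * ω - 1) +
      (((lam : ℝ) : ℂ) + 1) * (-(((lam : ℝ) : ℂ) - 1) * ω - (((lam : ℝ) : ℂ) + 1)) with hC
  set D : ℂ := -((((lam : ℝ) : ℂ) - 1) * ω + ((lam : ℝ) : ℂ) + 1) +
      (((lam : ℝ) : ℂ) + 1) * (-ω + (((lam : ℝ) : ℂ) + 1) ^ 2) with hD
  have hdet_eq : (u * A) * D - (u * B) * C = u * (ω * ((lam : ℝ) : ℂ) ^ 6) := by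
    rw [hA, hB, hC, hD]; ring
  have habs_lc : ‖((lam : ℝ) : ℂ)‖ = lam := by
    rw [Complex.norm_real, Real.norm_eq_abs]
    exact _root_.abs_of_nonneg (by linarith)
  have hlam6 : lam ^ 6 = 27 := by
    calc lam ^ 6 = (lam ^ 2) ^ 3 := by ring
      _ = 27 := by rw [hs2]; norm_num
  have habs_det : ‖(u * A) * D - (u * B) * C‖ = 27 := by
    rw [hdet_eq, norm_mul, norm_mul, huabs, hωabs, norm_pow, habs_lc, hlam6]
    norm_num
  have hdet_ne : (u * A) * D - (u * B) * C ≠ 0 := by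
    intro h
    rw [h, norm_zero] at habs_det
    norm_num at habs_det
  have hconjlam : conj ((lam : ℝ) : ℂ) = ((lam : ℝ) : ℂ) := Complex.conj_ofReal _
  have hCC : C * conj C = 63 - 18 * ((lam : ℝ) : ℂ) := by
    rw [hC]
    simp only [map_add, map_sub, map_mul, map_neg, map_one, map_pow, hconjlam, hωconj]
    linear_combination (-(2 * ((lam : ℝ) : ℂ) - 6) ^ 2 + (-4 * ((lam : ℝ) : ℂ) ^ 4 + 8 * ((lam : ℝ) : ℂ) ^ 3 - 24 * ((lam : ℝ) : ℂ) + 36)) * hω2 + (3 * ((lam : ℝ) : ℂ) ^ 2 - 6 * ((lam : ℝ) : ℂ) + 21) * hs2c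
  have hDD : D * conj D = 198 + 108 * ((lam : ℝ) : ℂ) := by
    rw [hD]
    simp only [map_add, map_sub, map_mul, map_neg, map_one, map_pow, hconjlam, hωconj]
    linear_combination (-4 * ((lam : ℝ) : ℂ) ^ 2) * hω2 + (((lam : ℝ) : ℂ) ^ 4 + 6 * ((lam : ℝ) : ℂ) ^ 3 + 18 * ((lam : ℝ) : ℂ) ^ 2 + 36 * ((lam : ℝ) : ℂ) + 66) * hs2c
  have hnC : normSq C = 63 - 18 * lam := by
    have h : ((normSq C : ℝ) : ℂ) = ((63 - 18 * lam : ℝ) : ℂ) := by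
      rw [← Complex.mul_conj, hCC]; push_cast; ring
    exact_mod_cast h
  have hnD : normSq D = 198 + 108 * lam := by
    have h : ((normSq D : ℝ) : ℂ) = ((198 + 108 * lam : ℝ) : ℂ) := by
      rw [← Complex.mul_conj, hDD]; push_cast; ring
    exact_mod_cast h
  have hlam2 : lam ≤ 2 := by nlinarith
  have hcd : ‖C‖ < ‖D‖ := by
    rw [Complex.norm_def, Complex.norm_def, hnC, hnD]
    apply Real.sqrt_lt_sqrt (by nlinarith)
    nlinarith
  have hKval : (‖D‖) ^ 2 - (‖C‖) ^ 2 = 135 + 126 * lam := by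
    rw [Complex.sq_norm, Complex.sq_norm, hnC, hnD]; ring
  have hstep : ∀ p q : ℂ, q ≠ 0 →
      apolF (p / q) = ((((lam : ℝ) : ℂ) - 1) * p + q) / (-p + (((lam : ℝ) : ℂ) + 1) * q) := by
    intro p q hq
    rw [apolF]
    have h1 : (((lam : ℝ) : ℂ) - 1) * (p / q) + 1 = ((((lam : ℝ) : ℂ) - 1) * p + q) / q := by
      field_simp
    have h2 : -(p / q) + ((lam : ℝ) : ℂ) + 1 = (-p + (((lam : ℝ) : ℂ) + 1) * q) / q := by
      field_simp
      ring
    rw [h1, h2, div_div_div_cancel_right₀ hq]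
  have hpt : ∀ z ∈ unitD, phi k 2 z = (fun z => ((u * A) * z + u * B) / (C * z + D)) z := by
    intro z hz
    have hz1 : ‖z‖ ≤ 1 := by
      simpa [unitD, Complex.dist_eq] using (Metric.mem_closedBall.mp hz)
    have habs_lc1 : ‖((lam : ℝ) : ℂ) + 1‖ = lam + 1 := by
      rw [show ((lam : ℝ) : ℂ) + 1 = ((lam + 1 : ℝ) : ℂ) by push_cast; ring,
        Complex.norm_real, Real.norm_eq_abs]
      exact _root_.abs_of_nonneg (by linarith)
    have hd1 : -z + ((lam : ℝ) : ℂ) + 1 ≠ 0 := by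
      intro h
      have hz' : z = ((lam : ℝ) : ℂ) + 1 := by linear_combination -h
      rw [hz', habs_lc1] at hz1
      linarith
    have habs_n1 : ‖(((lam : ℝ) : ℂ) - 1) * z + 1‖ ≤ lam := by
      have hm1 : ‖((lam : ℝ) : ℂ) - 1‖ = lam - 1 := by
        rw [show ((lam : ℝ) : ℂ) - 1 = ((lam - 1 : ℝ) : ℂ) by push_cast; ring,
          Complex.norm_real, Real.norm_eq_abs]
        exact _root_.abs_of_nonneg (by linarith)
      calc ‖(((lam : ℝ) : ℂ) - 1) * z + 1‖
          ≤ ‖(((lam : ℝ) : ℂ) - 1) * z‖ + ‖1‖ := norm_add_le _ _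
        _ = (lam - 1) * ‖z‖ + 1 := by rw [norm_mul, norm_one, hm1]
        _ ≤ (lam - 1) * 1 + 1 := by
            have := mul_le_mul_of_nonneg_left hz1 (by linarith : (0:ℝ) ≤ lam - 1)
            linarith
        _ = lam := by ring
    have habs_d1 : lam ≤ ‖-z + ((lam : ℝ) : ℂ) + 1‖ := by
      have h1 : ‖((lam : ℝ) : ℂ) + 1‖ ≤
          ‖-z + ((lam : ℝ) : ℂ) + 1‖ + ‖z‖ := by
        calc ‖((lam : ℝ) : ℂ) + 1‖
            = ‖(-z + ((lam : ℝ) : ℂ) + 1) + z‖ := by ring_nf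
          _ ≤ ‖-z + ((lam : ℝ) : ℂ) + 1‖ + ‖z‖ := norm_add_le _ _
      rw [habs_lc1] at h1
      linarith
    have hd2 : -(ω * ((((lam : ℝ) : ℂ) - 1) * z + 1)) +
        (((lam : ℝ) : ℂ) + 1) * (-z + ((lam : ℝ) : ℂ) + 1) ≠ 0 := by
      intro h
      have h1 : ‖(((lam : ℝ) : ℂ) + 1) * (-z + ((lam : ℝ) : ℂ) + 1)‖ ≤
          ‖-(ω * ((((lam : ℝ) : ℂ) - 1) * z + 1)) +
            (((lam : ℝ) : ℂ) + 1) * (-z + ((lam : ℝ) : ℂ) + 1)‖ +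
            ‖ω * ((((lam : ℝ) : ℂ) - 1) * z + 1)‖ := by
        calc ‖(((lam : ℝ) : ℂ) + 1) * (-z + ((lam : ℝ) : ℂ) + 1)‖
            = ‖(-(ω * ((((lam : ℝ) : ℂ) - 1) * z + 1)) +
                (((lam : ℝ) : ℂ) + 1) * (-z + ((lam : ℝ) : ℂ) + 1)) +
                ω * ((((lam : ℝ) : ℂ) - 1) * z + 1)‖ := by ring_nf
          _ ≤ _ := norm_add_le _ _
      rw [h, norm_zero, zero_add] at h1
      have h2 : ‖ω * ((((lam : ℝ) : ℂ) - 1) * z + 1)‖ =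
          ‖(((lam : ℝ) : ℂ) - 1) * z + 1‖ := by
        rw [norm_mul, hωabs, one_mul]
      rw [h2, norm_mul, habs_lc1] at h1
      nlinarith [habs_n1, habs_d1, hs2, hs1,
        mul_le_mul_of_nonneg_left habs_d1 (by linarith : (0:ℝ) ≤ lam + 1)]
    have hphi : phi k 2 z = u * apolF (apolF (ω * apolF z)) := by
      simp only [phi, Function.comp_apply, Rot, hu, hω]
      congr 1
    rw [hphi]
    have e1 : apolF z = ((((lam : ℝ) : ℂ) - 1) * z + 1) / (-z + ((lam : ℝ) : ℂ) + 1) := rfl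
    rw [e1, mul_div_assoc' ω _ _, hstep _ _ hd1, hstep _ _ hd2, mul_div_assoc' u _ _]
    show _ = ((u * A) * z + u * B) / (C * z + D)
    rw [hA, hB, hC, hD]
    congr 1
    · ring
    · ring
  have himg : phi k 2 '' unitD = (fun z => ((u * A) * z + u * B) / (C * z + D)) '' unitD :=
    Set.image_congr hpt
  rw [himg, show unitD = Metric.closedBall (0 : ℂ) 1 from rfl,
    apol_moebius_image (u * A) (u * B) C D hdet_ne hcd]
  have hr : ‖(u * A) * D - (u * B) * C‖ /
      ((‖D‖) ^ 2 - (‖C‖) ^ 2) = (14 * Real.sqrt 3 - 15) / 121 := by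
    rw [habs_det, hKval, show Real.sqrt 3 = lam from rfl,
      div_eq_div_iff (ne_of_gt (by nlinarith : (0:ℝ) < 135 + 126 * lam))
        (by norm_num : (121:ℝ) ≠ 0)]
    linear_combination (-1764 : ℝ) * hs2
  rw [hr]
  exact ⟨_, rfl⟩

end
end

section
/- For each k = 1,…,6, the image φ_{k,3}(𝔻) of the closed unit disk is a closed disk of radius (26√3−21)/529; i.e., there exists c ∈ ℂ such that φ_{k,3}(𝔻) is the closed ball of center c and radius (26√3−21)/529. -/
open Complex Metric Set
open scoped ENNReal

noncomputable section

/- ### Auxiliary lemmas -/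

lemma sq3 : lam ^ 2 = 3 := Real.sq_sqrt (by norm_num)
lemma lam_pos : 0 < lam := Real.sqrt_pos.2 (by norm_num)
lemma lam_gt : 1.5 < lam := by nlinarith [sq3, lam_pos]
lemma lam_lt2 : lam < 2 := by nlinarith [sq3, lam_pos]
lemma sq3C : ((lam : ℝ) : ℂ) ^ 2 = 3 := by rw [← Complex.ofReal_pow, sq3]; norm_num

lemma affine_image (a b c : ℂ) (r : ℝ) (ha : a ≠ 0) :
    (fun z => a * z + b) '' closedBall c r = closedBall (a * c + b) (‖a‖ * r) := by
  ext w
  simp only [mem_image, mem_closedBall, Complex.dist_eq]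
  constructor
  · rintro ⟨z, hz, rfl⟩
    have h1 : a * z + b - (a * c + b) = a * (z - c) := by ring
    rw [h1, norm_mul]
    exact mul_le_mul_of_nonneg_left hz (norm_nonneg a)
  · intro hw
    refine ⟨(w - b) / a, ?_, by field_simp; ring⟩
    have h1 : (w - b) / a - c = (w - (a * c + b)) / a := by field_simp; ring
    rw [h1, norm_div, div_le_iff₀ (norm_pos_iff.mpr ha)]
    linarith [hw, mul_comm ‖a‖ r]

lemma dist_le_iff_normSq (z c : ℂ) (r : ℝ) (hr : 0 ≤ r) :
    dist z c ≤ r ↔ Complex.normSq (z - c) ≤ r ^ 2 := by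
  rw [Complex.dist_eq, ← Complex.sq_norm]
  exact ⟨fun h => pow_le_pow_left₀ (norm_nonneg _) h 2,
    fun h => le_of_pow_le_pow_left₀ two_ne_zero hr h⟩

lemma invBall_mem_iff (c z : ℂ) (r : ℝ) (hr : 0 ≤ r) (h : r ^ 2 < Complex.normSq c)
    (hz : z ≠ 0) :
    z⁻¹ ∈ closedBall (((starRingEnd ℂ) c) / ((Complex.normSq c - r ^ 2 : ℝ) : ℂ))
      (r / (Complex.normSq c - r ^ 2)) ↔ z ∈ closedBall c r := by
  set D : ℝ := Complex.normSq c - r ^ 2 with hDdef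
  have hD : 0 < D := by simp [hDdef]; linarith
  have hDne : (D : ℂ) ≠ 0 := by exact_mod_cast ne_of_gt hD
  have hzn : 0 < ‖z‖ := norm_pos_iff.mpr hz
  rw [mem_closedBall, mem_closedBall,
    dist_le_iff_normSq _ _ _ (by positivity), dist_le_iff_normSq _ _ _ hr]
  have key : Complex.normSq (z⁻¹ - (starRingEnd ℂ) c / (D : ℂ))
      = Complex.normSq ((D : ℂ) - (starRingEnd ℂ) c * z) / (D ^ 2 * Complex.normSq z) := by
    have h1 : z⁻¹ - (starRingEnd ℂ) c / (D : ℂ)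
        = ((D : ℂ) - (starRingEnd ℂ) c * z) / ((D : ℂ) * z) := by
      field_simp
    rw [h1, Complex.normSq_div, Complex.normSq_mul]
    congr 1
    simp [Complex.normSq_ofReal, sq]
  rw [key]
  have hnz : 0 < Complex.normSq z := Complex.normSq_pos.2 hz
  rw [div_le_iff₀ (by positivity)]
  have iden : Complex.normSq ((D : ℂ) - (starRingEnd ℂ) c * z)
      - r ^ 2 * Complex.normSq z = D * (Complex.normSq (z - c) - r ^ 2) := by
    simp only [Complex.normSq_apply, Complex.sub_re, Complex.sub_im, Complex.mul_re,
      Complex.mul_im, Complex.conj_re, Complex.conj_im, Complex.ofReal_re, Complex.ofReal_im,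
      hDdef]
    ring
  have hrd : (r / D) ^ 2 * (D ^ 2 * Complex.normSq z) = r ^ 2 * Complex.normSq z := by
    field_simp
  rw [hrd]
  constructor
  · intro hle
    nlinarith [hle, iden, mul_pos hD hnz, hD, hnz]
  · intro hle
    nlinarith [hle, iden, mul_nonneg (le_of_lt hD) (sub_nonneg.2 hle), hD]

lemma inv_image (c : ℂ) (r : ℝ) (hr : 0 ≤ r) (h : r ^ 2 < Complex.normSq c) :
    (fun z => z⁻¹) '' closedBall c r
      = closedBall (((starRingEnd ℂ) c) / ((Complex.normSq c - r ^ 2 : ℝ) : ℂ))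
        (r / (Complex.normSq c - r ^ 2)) := by
  have hrc : r < ‖c‖ := by
    nlinarith [norm_nonneg c, Complex.sq_norm c]
  ext w
  constructor
  · rintro ⟨z, hz, rfl⟩
    have hz0 : z ≠ 0 := by
      rintro rfl
      rw [mem_closedBall, dist_comm, Complex.dist_eq, sub_zero] at hz
      linarith
    exact (invBall_mem_iff c z r hr h hz0).2 hz
  · intro hw
    have hD : 0 < Complex.normSq c - r ^ 2 := by linarith
    have hw0 : w ≠ 0 := by
      rintro rfl
      rw [mem_closedBall, dist_comm, Complex.dist_eq, sub_zero, norm_div] at hw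
      simp only [Complex.norm_conj, Complex.norm_real, Real.norm_eq_abs, abs_of_pos hD] at hw
      rw [div_le_div_iff₀ hD hD] at hw
      nlinarith
    refine ⟨w⁻¹, ?_, inv_inv w⟩
    have := (invBall_mem_iff c w⁻¹ r hr h (inv_ne_zero hw0))
    rw [inv_inv] at this
    exact this.1 hw

lemma translate_image (t c : ℂ) (r : ℝ) :
    (fun z => z + t) '' closedBall c r = closedBall (c + t) r := by
  ext w
  simp only [mem_image, mem_closedBall]
  constructor
  · rintro ⟨z, hz, rfl⟩
    simpa [Complex.dist_eq, add_sub_add_right_eq_sub] using hz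
  · intro hw
    exact ⟨w - t, by simpa [Complex.dist_eq, sub_sub] using hw, by ring⟩

lemma fimg (x y r : ℝ) (hr : 0 ≤ r) (h : r ^ 2 < (x - (lam + 1)) ^ 2 + y ^ 2) :
    apolF '' closedBall ((x : ℂ) + (y : ℂ) * I) r
      = closedBall
          ((((1 - lam) - 3 * (x - (lam + 1)) / ((x - (lam + 1)) ^ 2 + y ^ 2 - r ^ 2) : ℝ) : ℂ)
            + ((3 * y / ((x - (lam + 1)) ^ 2 + y ^ 2 - r ^ 2) : ℝ) : ℂ) * I)
          (3 * r / ((x - (lam + 1)) ^ 2 + y ^ 2 - r ^ 2)) := by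
  set X : ℝ := x - (lam + 1) with hX
  set D : ℝ := X ^ 2 + y ^ 2 - r ^ 2 with hD
  have hDpos : 0 < D := by rw [hD]; linarith
  have hDC : ((D : ℝ) : ℂ) ≠ 0 := by exact_mod_cast ne_of_gt hDpos
  have hpole : ∀ z ∈ closedBall ((x : ℂ) + (y : ℂ) * I) r, (-z + (lam : ℂ) + 1) ≠ 0 := by
    intro z hz hzero
    have hzeq : z = ((lam : ℂ) + 1) := by linear_combination -hzero
    rw [hzeq, mem_closedBall, dist_le_iff_normSq _ _ _ hr] at hz
    have : ((lam : ℂ) + 1) - ((x : ℂ) + (y : ℂ) * I)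
        = ((lam + 1 - x : ℝ) : ℂ) + ((-y : ℝ) : ℂ) * I := by
      push_cast; ring
    rw [this, Complex.normSq_add_mul_I] at hz
    have hXX : (lam + 1 - x) ^ 2 = X ^ 2 := by rw [hX]; ring
    nlinarith [hz, h, hXX]
  have hagree : EqOn apolF
      ((fun w => (-3 : ℂ) * w + ((1 : ℂ) - (lam : ℂ))) ∘ (fun z => z⁻¹) ∘
        (fun z => z + (-((lam : ℂ) + 1)))) (closedBall ((x : ℂ) + (y : ℂ) * I) r) := by
    intro z hz
    have h1 : (-z + (lam : ℂ) + 1) ≠ 0 := hpole z hz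
    have h2 : z + (-((lam : ℂ) + 1)) ≠ 0 := by
      intro h0; apply h1; linear_combination -h0
    have hui : (z + -((lam : ℂ) + 1)) * (z + -((lam : ℂ) + 1))⁻¹ = 1 :=
      mul_inv_cancel₀ h2
    simp only [apolF, Function.comp_apply]
    rw [div_eq_iff h1]
    linear_combination (-3 : ℂ) * hui + sq3C
  rw [Set.image_congr hagree, Set.image_comp, Set.image_comp, translate_image]
  have hc1 : ((x : ℂ) + (y : ℂ) * I) + (-((lam : ℂ) + 1)) = ((X : ℝ) : ℂ) + (y : ℂ) * I := by
    rw [hX]; push_cast; ring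
  rw [hc1, inv_image _ _ hr (by rw [Complex.normSq_add_mul_I]; exact h),
    affine_image _ _ _ _ (by norm_num)]
  rw [Complex.normSq_add_mul_I]
  have habs : ‖(-3 : ℂ)‖ = 3 := by simp
  rw [habs]
  simp only [mul_div_assoc']
  congr 1
  · rw [map_add, map_mul, Complex.conj_I, Complex.conj_ofReal, Complex.conj_ofReal]
    rw [hD, hX]
    push_cast
    have hne : ((x : ℂ) - (↑lam + 1)) ^ 2 + (y : ℂ) ^ 2 - (r : ℂ) ^ 2 ≠ 0 := by
      have : (((x - (lam + 1)) ^ 2 + y ^ 2 - r ^ 2 : ℝ) : ℂ) ≠ 0 := by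
        exact_mod_cast ne_of_gt (by rw [hD, hX] at hDpos; exact hDpos)
      push_cast at this
      convert this using 2 <;> ring
    field_simp
    ring

lemma rot_image (θ : ℝ) (c : ℂ) (r : ℝ) :
    Rot θ '' closedBall c r = closedBall (Complex.exp ((θ : ℂ) * I) * c) r := by
  have h1 : Rot θ = fun z => Complex.exp ((θ : ℂ) * I) * z + 0 := by
    funext z; simp [Rot]
  rw [h1, affine_image _ _ _ _ (Complex.exp_ne_zero _), add_zero]
  congr 1
  rw [Complex.norm_exp_ofReal_mul_I, one_mul]

/-- φ_{k,3}(𝔻) is a closed disk of radius (26√3−21)/529. -/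
theorem apollonian_third_disk (k : ℕ) (hk1 : 1 ≤ k) (hk6 : k ≤ 6) :
    ∃ c : ℂ, phi k 3 '' unitD = Metric.closedBall c ((26 * Real.sqrt 3 - 21) / 529) := by
  have hlamr : Real.sqrt 3 = lam := rfl
  -- trigonometric data
  obtain ⟨s, hs, hexp⟩ : ∃ s : ℝ, s ^ 2 = 1 ∧
      Complex.exp ((thetaA k : ℂ) * I) = ((-(1/2) : ℝ) : ℂ) + ((s * (lam / 2) : ℝ) : ℂ) * I := by
    have hcs : Complex.exp ((thetaA k : ℂ) * I)
        = ((Real.cos (thetaA k) : ℝ) : ℂ) + ((Real.sin (thetaA k) : ℝ) : ℂ) * I := by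
      rw [Complex.exp_mul_I]; push_cast; ring
    rcases Nat.even_or_odd k with hk | hk
    · refine ⟨1, by norm_num, ?_⟩
      rw [hcs]
      have hA : thetaA k = Real.pi - Real.pi / 3 := by
        rw [thetaA, hk.neg_one_pow]; ring
      rw [hA, Real.cos_pi_sub, Real.sin_pi_sub, Real.cos_pi_div_three, Real.sin_pi_div_three]
      norm_num [lam]
    · refine ⟨-1, by norm_num, ?_⟩
      rw [hcs]
      have hA : thetaA k = -(Real.pi - Real.pi / 3) := by
        rw [thetaA, hk.neg_one_pow]; ring
      rw [hA, Real.cos_neg, Real.sin_neg, Real.cos_pi_sub, Real.sin_pi_sub,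
        Real.cos_pi_div_three, Real.sin_pi_div_three]
      norm_num [lam]
  have hsC : ((s : ℝ) : ℂ) ^ 2 = 1 := by exact_mod_cast hs
  -- step 0 : f(𝔻)
  have h0 : apolF '' unitD
      = closedBall (((4 - 2 * lam : ℝ) : ℂ) + ((0 : ℝ) : ℂ) * I) (2 * lam - 3) := by
    have hunit : unitD = closedBall (((0 : ℝ) : ℂ) + ((0 : ℝ) : ℂ) * I) 1 := by
      rw [unitD]; norm_num
    rw [hunit, fimg 0 0 1 (by norm_num) (by nlinarith [sq3, lam_pos])]
    have eD : ((0 : ℝ) - (lam + 1)) ^ 2 + (0 : ℝ) ^ 2 - (1 : ℝ) ^ 2 = 2 * lam + 3 := by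
      linear_combination sq3
    have h23 : (2 * lam + 3) ≠ 0 := by nlinarith [lam_pos]
    refine congrArg₂ Metric.closedBall ?_ ?_
    · rw [eD]
      push_cast
      have h23C : 2 * ((lam : ℝ) : ℂ) + 3 ≠ 0 := by
        intro h0'
        apply h23
        exact_mod_cast h0'
      have h23C' : ((lam : ℝ) : ℂ) * 2 + 3 ≠ 0 := by rwa [mul_comm]
      field_simp
      linear_combination (2 : ℂ) * sq3C
    · rw [eD]
      field_simp
      linear_combination (-4 : ℝ) * sq3
  -- step 1 : rotation
  have h1 : Rot (thetaA k) '' closedBall (((4 - 2 * lam : ℝ) : ℂ) + ((0 : ℝ) : ℂ) * I) (2 * lam - 3)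
      = closedBall (((lam - 2 : ℝ) : ℂ) + ((s * (2 * lam - 3) : ℝ) : ℂ) * I) (2 * lam - 3) := by
    rw [rot_image, hexp]
    refine congrArg₂ Metric.closedBall ?_ rfl
    push_cast
    linear_combination (-(s : ℂ) * Complex.I) * sq3C
  -- step 2 : second f
  have h2 : apolF '' closedBall (((lam - 2 : ℝ) : ℂ) + ((s * (2 * lam - 3) : ℝ) : ℂ) * I) (2 * lam - 3)
      = closedBall (((2 - lam : ℝ) : ℂ) + ((s * (2 * lam - 3) / 3 : ℝ) : ℂ) * I) ((2 * lam - 3) / 3) := by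
    rw [fimg (lam - 2) (s * (2 * lam - 3)) (2 * lam - 3) (by nlinarith [sq3, lam_gt])
      (by nlinarith [hs, sq3])]
    have eD : (lam - 2 - (lam + 1)) ^ 2 + (s * (2 * lam - 3)) ^ 2 - (2 * lam - 3) ^ 2 = 9 := by
      linear_combination (2 * lam - 3) ^ 2 * hs
    refine congrArg₂ Metric.closedBall ?_ ?_
    · rw [eD]; push_cast; ring
    · rw [eD]; ring
  -- step 3 : third f
  have h3 : apolF '' closedBall (((2 - lam : ℝ) : ℂ) + ((s * (2 * lam - 3) / 3 : ℝ) : ℂ) * I) ((2 * lam - 3) / 3)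
      = closedBall ((((14 - 5 * lam) / 11 : ℝ) : ℂ) + ((s * (14 * lam - 15) / 121 : ℝ) : ℂ) * I)
          ((14 * lam - 15) / 121) := by
    rw [fimg (2 - lam) (s * (2 * lam - 3) / 3) ((2 * lam - 3) / 3) (by nlinarith [sq3, lam_gt])
      (by nlinarith [hs, sq3, lam_lt2, lam_pos])]
    have eD : (2 - lam - (lam + 1)) ^ 2 + (s * (2 * lam - 3) / 3) ^ 2 - ((2 * lam - 3) / 3) ^ 2
        = 13 - 4 * lam := by
      linear_combination ((2 * lam - 3) / 3) ^ 2 * hs + 4 * sq3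
    have h134 : (13 : ℝ) - 4 * lam ≠ 0 := by nlinarith [lam_lt2, lam_pos]
    refine congrArg₂ Metric.closedBall ?_ ?_
    · rw [eD]
      push_cast
      have h134C : (13 : ℂ) - 4 * ((lam : ℝ) : ℂ) ≠ 0 := by
        intro h0'
        apply h134
        exact_mod_cast h0'
      have h134C' : (13 : ℂ) - ((lam : ℝ) : ℂ) * 4 ≠ 0 := by rwa [mul_comm]
      field_simp
      linear_combination ((2904 : ℂ) + (616 : ℂ) * (s : ℂ) * Complex.I) * sq3C
    · rw [eD]
      have h134' : (13 : ℝ) - lam * 4 ≠ 0 := by rwa [mul_comm]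
      field_simp
      linear_combination 56 * sq3
  -- step 4 : fourth f (center left in raw form)
  have hr3 : (0 : ℝ) ≤ (14 * lam - 15) / 121 := by nlinarith [sq3, lam_gt]
  have hpos4 : ((14 * lam - 15) / 121) ^ 2
      < ((14 - 5 * lam) / 11 - (lam + 1)) ^ 2 + (s * (14 * lam - 15) / 121) ^ 2 := by
    have h163 : (0 : ℝ) < 16 * lam - 3 := by nlinarith [lam_gt]
    nlinarith [hs, mul_pos h163 h163]
  have eD4 : ((14 - 5 * lam) / 11 - (lam + 1)) ^ 2 + (s * (14 * lam - 15) / 121) ^ 2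
      - ((14 * lam - 15) / 121) ^ 2 = (777 - 96 * lam) / 121 := by
    linear_combination ((14 * lam - 15) / 121) ^ 2 * hs + (256 / 121) * sq3
  have h4 : apolF '' closedBall ((((14 - 5 * lam) / 11 : ℝ) : ℂ)
        + ((s * (14 * lam - 15) / 121 : ℝ) : ℂ) * I) ((14 * lam - 15) / 121)
      = closedBall
          ((((1 - lam) - 3 * ((14 - 5 * lam) / 11 - (lam + 1)) / (((14 - 5 * lam) / 11 - (lam + 1)) ^ 2 + (s * (14 * lam - 15) / 121) ^ 2 - ((14 * lam - 15) / 121) ^ 2) : ℝ) : ℂ)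
            + ((3 * (s * (14 * lam - 15) / 121) / (((14 - 5 * lam) / 11 - (lam + 1)) ^ 2 + (s * (14 * lam - 15) / 121) ^ 2 - ((14 * lam - 15) / 121) ^ 2) : ℝ) : ℂ) * I)
          ((26 * lam - 21) / 529) := by
    rw [fimg ((14 - 5 * lam) / 11) (s * (14 * lam - 15) / 121) ((14 * lam - 15) / 121) hr3 hpos4]
    refine congrArg₂ Metric.closedBall rfl ?_
    rw [eD4]
    have h777 : (777 : ℝ) - 96 * lam ≠ 0 := by nlinarith [lam_lt2, lam_pos]
    have h777' : (777 : ℝ) - lam * 96 ≠ 0 := by rwa [mul_comm]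
    field_simp
    linear_combination (2496 : ℝ) * sq3
  -- assemble
  have h3f : (apolF^[3]) = apolF ∘ apolF ∘ apolF := by
    funext z
    simp [Function.iterate_succ_apply', Function.comp]
  have himg : phi k 3 '' unitD
      = Rot (thetaB k) '' (apolF '' (apolF '' (apolF '' (Rot (thetaA k) '' (apolF '' unitD))))) := by
    rw [phi, h3f]
    simp only [Set.image_comp]
  rw [himg, h0, h1, h2, h3, h4, rot_image]
  exact ⟨_, by rw [hlamr]⟩

end
end

section
/- For every finite word ω = (ω_1,…,ω_m) over the alphabet I and all z, w in the closed unit disk 𝔻, |φ'_ω(z)| ≤ 5.900319·|φ'_ω(w)|, where φ_ω = φ_{ω_1}∘⋯∘φ_{ω_m}. -/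
open Complex Metric Set
open scoped ENNReal

noncomputable section

/-- The Apollonian alphabet I = {1,…,6} × {1,2,3,…}. -/
def apolI : Set (ℕ × ℕ) := {p | 1 ≤ p.1 ∧ p.1 ≤ 6 ∧ 1 ≤ p.2}

/-- Composition φ_{ω₁}∘⋯∘φ_{ω_m} of a finite word ω = (ω₁,…,ω_m). -/
def wordComp (ω : List (ℕ × ℕ)) : ℂ → ℂ :=
  ω.foldr (fun p g => phi p.1 p.2 ∘ g) id

/-! ### Basic facts about λ -/

lemma lam_sq : lam^2 = 3 := Real.sq_sqrt (by norm_num)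
lemma lam_lb : 1.7320508 ≤ lam := by
  rw [lam, show (1.7320508:ℝ) = Real.sqrt (1.7320508^2) from (Real.sqrt_sq (by norm_num)).symm]
  exact Real.sqrt_le_sqrt (by norm_num)
lemma lam_ub : lam ≤ 1.7320509 := by
  rw [lam, show (1.7320509:ℝ) = Real.sqrt (1.7320509^2) from (Real.sqrt_sq (by norm_num)).symm]
  exact Real.sqrt_le_sqrt (by norm_num)

/-! ### Disk membership helpers -/

lemma mem_cb {z c : ℂ} {r : ℝ} (h : z ∈ Metric.closedBall c r) :
    (z.re - c.re)^2 + (z.im - c.im)^2 ≤ r^2 := by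
  rw [Metric.mem_closedBall, Complex.dist_eq] at h
  have h0 := norm_nonneg (z - c)
  have := Complex.sq_norm (z - c)
  rw [Complex.normSq_apply] at this
  simp only [Complex.sub_re, Complex.sub_im] at this
  nlinarith

lemma cb_mem {z c : ℂ} {r : ℝ} (hr : 0 ≤ r)
    (h : (z.re - c.re)^2 + (z.im - c.im)^2 ≤ r^2) : z ∈ Metric.closedBall c r := by
  rw [Metric.mem_closedBall, Complex.dist_eq]
  have := Complex.sq_norm (z - c)
  rw [Complex.normSq_apply] at this
  simp only [Complex.sub_re, Complex.sub_im] at this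
  nlinarith [norm_nonneg (z - c)]

lemma abs_le_mul_abs {N D : ℂ} {R : ℝ} (hR : 0 ≤ R)
    (h : N.re^2 + N.im^2 ≤ R^2 * (D.re^2 + D.im^2)) :
    ‖N‖ ≤ R * ‖D‖ := by
  have h1 := Complex.sq_norm N
  have h2 := Complex.sq_norm D
  rw [Complex.normSq_apply] at h1 h2
  nlinarith [norm_nonneg N, norm_nonneg D, mul_nonneg hR (norm_nonneg D)]

/-! ### Möbius bookkeeping -/

def MobOn (a b c d : ℂ) (g : ℂ → ℂ) (T U : Set ℂ) : Prop :=
  ∀ z ∈ T, c*z + d ≠ 0 ∧ g z = (a*z+b)/(c*z+d) ∧ g z ∈ U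

lemma MobOn.mono {a b c d g T U V} (h : MobOn a b c d g T U) (hUV : U ⊆ V) :
    MobOn a b c d g T V := fun z hz => ⟨(h z hz).1, (h z hz).2.1, hUV (h z hz).2.2⟩

lemma MobOn.congr {a b c d g g' T U} (h : MobOn a b c d g T U)
    (hgg : ∀ z ∈ T, g' z = g z) : MobOn a b c d g' T U := by
  intro z hz
  rcases h z hz with ⟨h1, h2, h3⟩
  exact ⟨h1, (hgg z hz).trans h2, (hgg z hz) ▸ h3⟩

lemma MobOn.comp {a₁ b₁ c₁ d₁ a₂ b₂ c₂ d₂ : ℂ} {f g : ℂ → ℂ} {T U V : Set ℂ}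
    (h₁ : MobOn a₁ b₁ c₁ d₁ f T U) (h₂ : MobOn a₂ b₂ c₂ d₂ g U V) :
    MobOn (a₂*a₁+b₂*c₁) (a₂*b₁+b₂*d₁) (c₂*a₁+d₂*c₁) (c₂*b₁+d₂*d₁)
      (fun z => g (f z)) T V := by
  intro z hz
  obtain ⟨hden1, hfz, hfU⟩ := h₁ z hz
  obtain ⟨hden2, hgz, hgV⟩ := h₂ _ hfU
  have hden2'' : c₂*(a₁*z+b₁) + d₂*(c₁*z+d₁) ≠ 0 := by
    have e : c₂*(a₁*z+b₁) + d₂*(c₁*z+d₁) = (c₂*(f z) + d₂) * (c₁*z+d₁) := by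
      rw [hfz, add_mul, mul_assoc c₂, div_mul_cancel₀ _ hden1]
    rw [e]; exact mul_ne_zero hden2 hden1
  have e1 : (c₂*a₁+d₂*c₁)*z + (c₂*b₁+d₂*d₁) = c₂*(a₁*z+b₁) + d₂*(c₁*z+d₁) := by ring
  refine ⟨by rw [e1]; exact hden2'', ?_, hgV⟩
  show g (f z) = _
  rw [hgz, hfz, e1]
  rw [hfz] at hden2
  rw [div_eq_div_iff hden2 hden2'']
  linear_combination (a₂*d₂ - b₂*c₂) * (div_mul_cancel₀ (a₁*z+b₁) hden1)

/-! ### Concrete constants and sets -/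

def cc (a b : ℝ) : ℂ := (a:ℂ) + (b:ℂ)*Complex.I

@[simp] lemma cc_re (a b : ℝ) : (cc a b).re = a := by simp [cc]
@[simp] lemma cc_im (a b : ℝ) : (cc a b).im = b := by simp [cc]

def BB : Set ℂ := Metric.closedBall (0:ℂ) (12/5)
def D1 : Set ℂ := Metric.closedBall (cc 4.08 0) 4.228
def Sp : Set ℂ := Metric.closedBall (cc (-2.04) (2.04*lam)) 4.228
def Sm : Set ℂ := Metric.closedBall (cc (-2.04) (-(2.04*lam))) 4.228
def S1p : Set ℂ := Metric.closedBall (cc 0.092 0.61) 0.731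
def S1m : Set ℂ := Metric.closedBall (cc 0.092 (-0.61)) 0.731
def H61 : Set ℂ := Metric.closedBall (cc 0.39 0) 0.61
def Yp : Set ℂ := S1p ∪ H61
def Ym : Set ℂ := S1m ∪ H61

/-! ### The master step lemma for f -/

lemma apolF_step {Cre Cim R : ℝ} (hR : 0 ≤ R) {z : ℂ} (hre : z.re < lam + 1)
    (key : ((lam - 1 + Cre)*z.re - Cim*z.im + (1 - Cre*(lam+1)))^2
         + ((lam - 1 + Cre)*z.im + Cim*z.re - Cim*(lam+1))^2
         ≤ R^2 * ((lam + 1 - z.re)^2 + z.im^2)) :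
    (-1:ℂ)*z + ((lam:ℂ)+1) ≠ 0 ∧ apolF z = (((lam:ℂ)-1)*z+1)/((-1)*z + ((lam:ℂ)+1)) ∧
      apolF z ∈ Metric.closedBall (cc Cre Cim) R := by
  have hDre : ((-1:ℂ)*z + ((lam:ℂ)+1)).re = lam + 1 - z.re := by
    simp [Complex.add_re, Complex.neg_re]; ring
  have hDim : ((-1:ℂ)*z + ((lam:ℂ)+1)).im = -z.im := by
    simp [Complex.add_im, Complex.neg_im]
  have hden : (-1:ℂ)*z + ((lam:ℂ)+1) ≠ 0 := by
    intro h
    rw [h] at hDre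
    simp at hDre
    linarith
  have heq : apolF z = (((lam:ℂ)-1)*z+1)/((-1)*z + ((lam:ℂ)+1)) := by
    rw [apolF, show -z + (lam:ℂ) + 1 = (-1)*z + ((lam:ℂ)+1) by ring]
  refine ⟨hden, heq, ?_⟩
  set N : ℂ := ((lam:ℂ)-1+(cc Cre Cim))*z + (1 - (cc Cre Cim)*((lam:ℂ)+1)) with hN
  set D : ℂ := (-1:ℂ)*z + ((lam:ℂ)+1) with hD
  have hsub : apolF z - (cc Cre Cim) = N / D := by
    rw [heq, hN, div_sub' hden]
    congr 1
    ring
  have hNre : N.re = (lam - 1 + Cre)*z.re - Cim*z.im + (1 - Cre*(lam+1)) := by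
    simp [hN, Complex.add_re, Complex.mul_re, Complex.sub_re, Complex.sub_im,
      Complex.add_im, Complex.mul_im]
    try ring
  have hNim : N.im = (lam - 1 + Cre)*z.im + Cim*z.re - Cim*(lam+1) := by
    simp [hN, Complex.add_re, Complex.mul_re, Complex.sub_re, Complex.sub_im,
      Complex.add_im, Complex.mul_im]
    try ring
  have hsq : N.re^2 + N.im^2 ≤ R^2 * (D.re^2 + D.im^2) := by
    rw [hNre, hNim, hDre, hDim]
    nlinarith [key]
  have habs : ‖N‖ ≤ R * ‖D‖ := abs_le_mul_abs hR hsq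
  have hDpos : 0 < ‖D‖ := by
    simpa [norm_pos_iff] using hden
  rw [Metric.mem_closedBall, Complex.dist_eq, hsub, norm_div]
  rw [div_le_iff₀ hDpos]
  exact habs

/-! ### Concrete mapping lemmas for f -/

set_option maxHeartbeats 4000000

lemma step_B_D1 : MobOn ((lam:ℂ)-1) 1 (-1) ((lam:ℂ)+1) apolF BB D1 := by
  intro z hz
  have h := mem_cb hz
  simp only [Complex.zero_re, Complex.zero_im, sub_zero] at h
  have hl := lam_sq; have hl5 := lam_lb; have hl6 := lam_ub
  have hl0 : (0:ℝ) ≤ lam := le_of_lt lam_pos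
  have hre : z.re < lam + 1 := by nlinarith [sq_nonneg z.im]
  have key : ((lam - 1 + 4.08)*z.re - 0*z.im + (1 - 4.08*(lam+1)))^2
         + ((lam - 1 + 4.08)*z.im + 0*z.re - 0*(lam+1))^2
         ≤ 4.228^2 * ((lam + 1 - z.re)^2 + z.im^2) := by
    have hx1 : z.re ≤ 12/5 := by nlinarith [sq_nonneg z.im]
    have hx2 : -(12/5) ≤ z.re := by nlinarith [sq_nonneg z.im]
    have hd' : (0:ℝ) ≤ (12/5)^2 - z.re^2 - z.im^2 := by linarith
    nlinarith [hd', mul_nonneg hl0 hd', sq_nonneg (z.re - 2.4),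
      mul_nonneg hl0 (sq_nonneg (z.re-2.4)), sq_nonneg z.im,
      mul_nonneg hl0 (sq_nonneg z.im), hl, hx1, hx2, hl5, hl6]
  exact apolF_step (by norm_num) hre key

lemma step_Sp_S1p : MobOn ((lam:ℂ)-1) 1 (-1) ((lam:ℂ)+1) apolF Sp S1p := by
  intro z hz
  have h := mem_cb hz
  simp only [cc_re, cc_im] at h
  have hl := lam_sq; have hl5 := lam_lb; have hl6 := lam_ub
  have hl0 : (0:ℝ) ≤ lam := le_of_lt lam_pos
  have hre : z.re < lam + 1 := by nlinarith [sq_nonneg (z.im - 2.04*lam)]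
  have key : ((lam - 1 + 0.092)*z.re - 0.61*z.im + (1 - 0.092*(lam+1)))^2
         + ((lam - 1 + 0.092)*z.im + 0.61*z.re - 0.61*(lam+1))^2
         ≤ 0.731^2 * ((lam + 1 - z.re)^2 + z.im^2) := by
    have hd' : (0:ℝ) ≤ 4.228^2 - (z.re+2.04)^2 - (z.im-2.04*lam)^2 := by nlinarith [h]
    have hx1 : z.re ≤ 2.188 := by nlinarith [sq_nonneg (z.im-2.04*lam)]
    have hx2 : -6.268 ≤ z.re := by nlinarith [sq_nonneg (z.im-2.04*lam)]
    have hy1 : z.im ≤ 2.04*lam + 4.228 := by nlinarith [sq_nonneg (z.re+2.04)]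
    have hy2 : 2.04*lam - 4.228 ≤ z.im := by nlinarith [sq_nonneg (z.re+2.04)]
    nlinarith [hd', mul_nonneg hl0 hd', sq_nonneg (z.re - 1.488),
      mul_nonneg hl0 (sq_nonneg (z.re-1.488)), sq_nonneg (z.im - 1.195),
      mul_nonneg hl0 (sq_nonneg (z.im-1.195)), hl, hx1, hx2, hy1, hy2, hl5, hl6]
  exact apolF_step (by norm_num) hre key

lemma step_Sm_S1m : MobOn ((lam:ℂ)-1) 1 (-1) ((lam:ℂ)+1) apolF Sm S1m := by
  intro z hz
  have h := mem_cb hz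
  simp only [cc_re, cc_im] at h
  have hl := lam_sq; have hl5 := lam_lb; have hl6 := lam_ub
  have hl0 : (0:ℝ) ≤ lam := le_of_lt lam_pos
  have hre : z.re < lam + 1 := by nlinarith [sq_nonneg (z.im + 2.04*lam)]
  have key : ((lam - 1 + 0.092)*z.re - (-0.61)*z.im + (1 - 0.092*(lam+1)))^2
         + ((lam - 1 + 0.092)*z.im + (-0.61)*z.re - (-0.61)*(lam+1))^2
         ≤ 0.731^2 * ((lam + 1 - z.re)^2 + z.im^2) := by
    have hd' : (0:ℝ) ≤ 4.228^2 - (z.re+2.04)^2 - (z.im+2.04*lam)^2 := by nlinarith [h]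
    have hx1 : z.re ≤ 2.188 := by nlinarith [sq_nonneg (z.im+2.04*lam)]
    have hx2 : -6.268 ≤ z.re := by nlinarith [sq_nonneg (z.im+2.04*lam)]
    have hy1 : -z.im ≤ 2.04*lam + 4.228 := by nlinarith [sq_nonneg (z.re+2.04)]
    have hy2 : 2.04*lam - 4.228 ≤ -z.im := by nlinarith [sq_nonneg (z.re+2.04)]
    nlinarith [hd', mul_nonneg hl0 hd', sq_nonneg (z.re - 1.488),
      mul_nonneg hl0 (sq_nonneg (z.re-1.488)), sq_nonneg (z.im + 1.195),
      mul_nonneg hl0 (sq_nonneg (z.im+1.195)), hl, hx1, hx2, hy1, hy2, hl5, hl6]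
  exact apolF_step (by norm_num) hre key

lemma step_S1p_H61 : MobOn ((lam:ℂ)-1) 1 (-1) ((lam:ℂ)+1) apolF S1p H61 := by
  intro z hz
  have h := mem_cb hz
  simp only [cc_re, cc_im] at h
  have hl := lam_sq; have hl5 := lam_lb; have hl6 := lam_ub
  have hl0 : (0:ℝ) ≤ lam := le_of_lt lam_pos
  have hre : z.re < lam + 1 := by nlinarith [sq_nonneg (z.im - 0.61)]
  have key : ((lam - 1 + 0.39)*z.re - 0*z.im + (1 - 0.39*(lam+1)))^2
         + ((lam - 1 + 0.39)*z.im + 0*z.re - 0*(lam+1))^2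
         ≤ 0.61^2 * ((lam + 1 - z.re)^2 + z.im^2) := by
    have hd' : (0:ℝ) ≤ 0.731^2 - (z.re-0.092)^2 - (z.im-0.61)^2 := by nlinarith [h]
    have hx1 : z.re ≤ 0.823 := by nlinarith [sq_nonneg (z.im-0.61)]
    have hx2 : -0.639 ≤ z.re := by nlinarith [sq_nonneg (z.im-0.61)]
    have hy1 : z.im ≤ 1.341 := by nlinarith [sq_nonneg (z.re-0.092)]
    have hy2 : -0.121 ≤ z.im := by nlinarith [sq_nonneg (z.re-0.092)]
    nlinarith [hd', mul_nonneg hl0 hd', sq_nonneg (z.re - 0.738),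
      mul_nonneg hl0 (sq_nonneg (z.re-0.738)), sq_nonneg (z.im - 0.951),
      mul_nonneg hl0 (sq_nonneg (z.im-0.951)), hl, hx1, hx2, hy1, hy2, hl5, hl6]
  exact apolF_step (by norm_num) hre key

lemma step_S1m_H61 : MobOn ((lam:ℂ)-1) 1 (-1) ((lam:ℂ)+1) apolF S1m H61 := by
  intro z hz
  have h := mem_cb hz
  simp only [cc_re, cc_im] at h
  have hl := lam_sq; have hl5 := lam_lb; have hl6 := lam_ub
  have hl0 : (0:ℝ) ≤ lam := le_of_lt lam_pos
  have hre : z.re < lam + 1 := by nlinarith [sq_nonneg (z.im + 0.61)]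
  have key : ((lam - 1 + 0.39)*z.re - 0*z.im + (1 - 0.39*(lam+1)))^2
         + ((lam - 1 + 0.39)*z.im + 0*z.re - 0*(lam+1))^2
         ≤ 0.61^2 * ((lam + 1 - z.re)^2 + z.im^2) := by
    have hd' : (0:ℝ) ≤ 0.731^2 - (z.re-0.092)^2 - (z.im+0.61)^2 := by nlinarith [h]
    have hx1 : z.re ≤ 0.823 := by nlinarith [sq_nonneg (z.im+0.61)]
    have hx2 : -0.639 ≤ z.re := by nlinarith [sq_nonneg (z.im+0.61)]
    have hy1 : -z.im ≤ 1.341 := by nlinarith [sq_nonneg (z.re-0.092)]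
    have hy2 : -0.121 ≤ -z.im := by nlinarith [sq_nonneg (z.re-0.092)]
    nlinarith [hd', mul_nonneg hl0 hd', sq_nonneg (z.re - 0.738),
      mul_nonneg hl0 (sq_nonneg (z.re-0.738)), sq_nonneg (z.im + 0.951),
      mul_nonneg hl0 (sq_nonneg (z.im+0.951)), hl, hx1, hx2, hy1, hy2, hl5, hl6]
  exact apolF_step (by norm_num) hre key

lemma step_H61_H61 : MobOn ((lam:ℂ)-1) 1 (-1) ((lam:ℂ)+1) apolF H61 H61 := by
  intro z hz
  have h := mem_cb hz
  simp only [cc_re, cc_im] at h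
  have hl := lam_sq; have hl5 := lam_lb; have hl6 := lam_ub
  have hl0 : (0:ℝ) ≤ lam := le_of_lt lam_pos
  have hre : z.re < lam + 1 := by nlinarith [sq_nonneg (z.im - 0)]
  have key : ((lam - 1 + 0.39)*z.re - 0*z.im + (1 - 0.39*(lam+1)))^2
         + ((lam - 1 + 0.39)*z.im + 0*z.re - 0*(lam+1))^2
         ≤ 0.61^2 * ((lam + 1 - z.re)^2 + z.im^2) := by
    have hd' : (0:ℝ) ≤ 0.61^2 - (z.re-0.39)^2 - (z.im-0)^2 := by nlinarith [h]
    nlinarith [hd', mul_nonneg hl0 hd', sq_nonneg (z.re - 1),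
      mul_nonneg hl0 (sq_nonneg (z.re-1)), sq_nonneg z.im,
      mul_nonneg hl0 (sq_nonneg z.im), hl]
  exact apolF_step (by norm_num) hre key

/-! ### Subset facts -/

lemma S1p_sub_Yp : S1p ⊆ Yp := Set.subset_union_left
lemma S1m_sub_Ym : S1m ⊆ Ym := Set.subset_union_left
lemma H61_sub_Yp : H61 ⊆ Yp := Set.subset_union_right
lemma H61_sub_Ym : H61 ⊆ Ym := Set.subset_union_right

lemma ball_sub_BB {a b r : ℝ} (h : Real.sqrt (a^2+b^2) + r ≤ 12/5) :
    Metric.closedBall (cc a b) r ⊆ BB := by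
  apply Metric.closedBall_subset_closedBall'
  have : dist (cc a b) (0:ℂ) = Real.sqrt (a^2+b^2) := by
    rw [Complex.dist_eq, sub_zero, Complex.norm_def, Complex.normSq_apply]
    simp [cc_re, cc_im]
    ring_nf
  rw [this]; linarith

lemma sqrt_le_of_sq {a r : ℝ} (hr : 0 ≤ r) (h : a ≤ r^2) : Real.sqrt a ≤ r := by
  calc Real.sqrt a ≤ Real.sqrt (r^2) := Real.sqrt_le_sqrt h
  _ = r := Real.sqrt_sq hr

lemma S1p_sub_BB : S1p ⊆ BB := ball_sub_BB (by
  have : Real.sqrt ((0.092:ℝ)^2+(0.61:ℝ)^2) ≤ 0.617 := sqrt_le_of_sq (by norm_num) (by norm_num)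
  linarith)
lemma S1m_sub_BB : S1m ⊆ BB := ball_sub_BB (by
  have : Real.sqrt ((0.092:ℝ)^2+(-(0.61:ℝ))^2) ≤ 0.617 := sqrt_le_of_sq (by norm_num) (by norm_num)
  linarith)
lemma H61_sub_BB : H61 ⊆ BB := ball_sub_BB (by
  have : Real.sqrt ((0.39:ℝ)^2+(0:ℝ)^2) ≤ 0.39 := sqrt_le_of_sq (by norm_num) (by norm_num)
  linarith)
lemma Yp_sub_BB : Yp ⊆ BB := Set.union_subset S1p_sub_BB H61_sub_BB
lemma Ym_sub_BB : Ym ⊆ BB := Set.union_subset S1m_sub_BB H61_sub_BB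

/-! ### Rotations -/

lemma rot_mob {θ : ℝ} {ζ c : ℂ} {r : ℝ} (hζ : Complex.exp ((θ:ℂ)*Complex.I) = ζ) :
    MobOn ζ 0 0 1 (Rot θ) (Metric.closedBall c r) (Metric.closedBall (ζ*c) r) := by
  intro z hz
  have habs : ‖ζ‖ = 1 := by rw [← hζ]; exact Complex.norm_exp_ofReal_mul_I θ
  refine ⟨by simp, by simp [Rot, hζ], ?_⟩
  rw [Metric.mem_closedBall, Complex.dist_eq] at hz ⊢
  have : Rot θ z - ζ*c = ζ*(z - c) := by simp [Rot, hζ]; ring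
  rw [this, norm_mul, habs, one_mul]
  exact hz

lemma rotB_mob (θ : ℝ) {T : Set ℂ} (hT : T ⊆ BB) :
    MobOn (Complex.exp ((θ:ℂ)*Complex.I)) 0 0 1 (Rot θ) T BB := by
  intro z hz
  refine ⟨by simp, by simp [Rot], ?_⟩
  have hzB := hT hz
  rw [BB, Metric.mem_closedBall, Complex.dist_eq, sub_zero] at hzB ⊢
  rw [show Rot θ z = Complex.exp ((θ:ℂ)*Complex.I) * z from rfl, norm_mul,
    Complex.norm_exp_ofReal_mul_I, one_mul]
  exact hzB

lemma exp_tA_even {k : ℕ} (hk : Even k) :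
    Complex.exp (((thetaA k : ℝ):ℂ)*Complex.I) = cc (-(1/2)) (lam/2) := by
  have h1 : thetaA k = 2*Real.pi/3 := by
    rw [thetaA, hk.neg_one_pow, one_mul]
  rw [h1, Complex.exp_mul_I, ← Complex.ofReal_cos, ← Complex.ofReal_sin]
  have hc : Real.cos (2*Real.pi/3) = -(1/2) := by
    rw [show 2*Real.pi/3 = Real.pi - Real.pi/3 by ring, Real.cos_pi_sub,
      Real.cos_pi_div_three]
  have hs : Real.sin (2*Real.pi/3) = lam/2 := by
    rw [show 2*Real.pi/3 = Real.pi - Real.pi/3 by ring, Real.sin_pi_sub,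
      Real.sin_pi_div_three, lam]
  rw [hc, hs, cc]

lemma exp_tA_odd {k : ℕ} (hk : Odd k) :
    Complex.exp (((thetaA k : ℝ):ℂ)*Complex.I) = cc (-(1/2)) (-(lam/2)) := by
  have h1 : thetaA k = -(2*Real.pi/3) := by
    rw [thetaA, hk.neg_one_pow]; ring
  rw [h1, Complex.exp_mul_I, ← Complex.ofReal_cos, ← Complex.ofReal_sin]
  have hc : Real.cos (-(2*Real.pi/3)) = -(1/2) := by
    rw [Real.cos_neg, show 2*Real.pi/3 = Real.pi - Real.pi/3 by ring, Real.cos_pi_sub,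
      Real.cos_pi_div_three]
  have hs : Real.sin (-(2*Real.pi/3)) = -(lam/2) := by
    rw [Real.sin_neg, show 2*Real.pi/3 = Real.pi - Real.pi/3 by ring, Real.sin_pi_sub,
      Real.sin_pi_div_three, lam]
  rw [hc, hs, cc]

lemma zeta_mul_p : cc (-(1/2)) (lam/2) * cc 4.08 0 = cc (-2.04) (2.04*lam) := by
  apply Complex.ext
  · simp [cc, Complex.add_re, Complex.mul_re]; norm_num
  · simp [cc, Complex.add_im, Complex.mul_im]; ring
lemma zeta_mul_m : cc (-(1/2)) (-(lam/2)) * cc 4.08 0 = cc (-2.04) (-(2.04*lam)) := by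
  apply Complex.ext
  · simp [cc, Complex.add_re, Complex.mul_re]; norm_num
  · simp [cc, Complex.add_im, Complex.mul_im]; ring

/-! ### Iteration -/

lemma mob_f_Yp : MobOn ((lam:ℂ)-1) 1 (-1) ((lam:ℂ)+1) apolF Yp H61 := by
  intro z hz
  rcases hz with hz | hz
  · exact step_S1p_H61 z hz
  · exact step_H61_H61 z hz

lemma mob_f_Ym : MobOn ((lam:ℂ)-1) 1 (-1) ((lam:ℂ)+1) apolF Ym H61 := by
  intro z hz
  rcases hz with hz | hz
  · exact step_S1m_H61 z hz
  · exact step_H61_H61 z hz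

lemma mobOn_id (T : Set ℂ) : MobOn 1 0 0 1 id T T := by
  intro z hz
  exact ⟨by simp, by simp, hz⟩

lemma iter_Yp (j : ℕ) : ∃ a b c d : ℂ, MobOn a b c d (apolF^[j]) Yp Yp := by
  induction j with
  | zero => exact ⟨1,0,0,1, by simpa using mobOn_id Yp⟩
  | succ j ih =>
    obtain ⟨a,b,c,d, hM⟩ := ih
    refine ⟨_,_,_,_, ((hM.comp mob_f_Yp).mono H61_sub_Yp).congr ?_⟩
    intro z hz
    exact Function.iterate_succ_apply' apolF j z

lemma iter_Ym (j : ℕ) : ∃ a b c d : ℂ, MobOn a b c d (apolF^[j]) Ym Ym := by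
  induction j with
  | zero => exact ⟨1,0,0,1, by simpa using mobOn_id Ym⟩
  | succ j ih =>
    obtain ⟨a,b,c,d, hM⟩ := ih
    refine ⟨_,_,_,_, ((hM.comp mob_f_Ym).mono H61_sub_Ym).congr ?_⟩
    intro z hz
    exact Function.iterate_succ_apply' apolF j z

/-! ### The generators are Möbius on BB -/

lemma gen_mob (k n : ℕ) (hn : 1 ≤ n) : ∃ a b c d : ℂ, MobOn a b c d (phi k n) BB BB := by
  obtain ⟨m, rfl⟩ : ∃ m, n = m + 1 := ⟨n-1, (Nat.succ_pred_eq_of_pos hn).symm⟩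
  rcases Nat.even_or_odd k with hk | hk
  · have hζ := exp_tA_even hk
    have hrotA : MobOn (cc (-(1/2)) (lam/2)) 0 0 1 (Rot (thetaA k)) D1 Sp := by
      have h := rot_mob (c := cc 4.08 0) (r := 4.228) hζ
      rw [zeta_mul_p] at h
      exact h
    obtain ⟨a,b,c,d, hit⟩ := iter_Yp m
    have hc1 := step_B_D1.comp hrotA
    have hc2 := hc1.comp step_Sp_S1p
    have hc3 := (hc2.mono S1p_sub_Yp).comp hit
    have hc4 := hc3.comp (rotB_mob (thetaB k) Yp_sub_BB)
    refine ⟨_,_,_,_, hc4.congr ?_⟩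
    intro z hz
    show Rot (thetaB k) ((apolF^[m+1]) (Rot (thetaA k) (apolF z))) = _
    rw [Function.iterate_succ_apply]
  · have hζ := exp_tA_odd hk
    have hrotA : MobOn (cc (-(1/2)) (-(lam/2))) 0 0 1 (Rot (thetaA k)) D1 Sm := by
      have h := rot_mob (c := cc 4.08 0) (r := 4.228) hζ
      rw [zeta_mul_m] at h
      exact h
    obtain ⟨a,b,c,d, hit⟩ := iter_Ym m
    have hc1 := step_B_D1.comp hrotA
    have hc2 := hc1.comp step_Sm_S1m
    have hc3 := (hc2.mono S1m_sub_Ym).comp hit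
    have hc4 := hc3.comp (rotB_mob (thetaB k) Ym_sub_BB)
    refine ⟨_,_,_,_, hc4.congr ?_⟩
    intro z hz
    show Rot (thetaB k) ((apolF^[m+1]) (Rot (thetaA k) (apolF z))) = _
    rw [Function.iterate_succ_apply]

/-! ### Words are Möbius on BB -/

lemma word_mob (ω : List (ℕ × ℕ)) (hω : ∀ p ∈ ω, p ∈ apolI) :
    ∃ a b c d : ℂ, MobOn a b c d (wordComp ω) BB BB := by
  induction ω with
  | nil => exact ⟨1,0,0,1, by simpa [wordComp] using mobOn_id BB⟩
  | cons p ω ih =>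
    have hp : p ∈ apolI := hω p List.mem_cons_self
    obtain ⟨a,b,c,d, hM⟩ := ih (fun q hq => hω q (List.mem_cons_of_mem p hq))
    obtain ⟨a',b',c',d', hG⟩ := gen_mob p.1 p.2 hp.2.2
    exact ⟨_,_,_,_, (hM.comp hG).congr (fun z hz => rfl)⟩

/-! ### Derivative of a Möbius map -/

lemma deriv_mob (a b c d z : ℂ) (h : c*z+d ≠ 0) :
    deriv (fun w => (a*w+b)/(c*w+d)) z = (a*d - b*c)/(c*z+d)^2 := by
  have h1 : HasDerivAt (fun w : ℂ => a*w+b) a z := by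
    simpa using ((hasDerivAt_id z).const_mul a).add_const b
  have h2 : HasDerivAt (fun w : ℂ => c*w+d) c z := by
    simpa using ((hasDerivAt_id z).const_mul c).add_const d
  refine (h1.div h2 h).deriv.trans ?_
  rw [show a*(c*z+d) - (a*z+b)*c = a*d - b*c by ring]

/-! ### Main theorem -/

/-- For every finite word ω over I and z, w ∈ 𝔻, |φ'_ω(z)| ≤ 5.900319 · |φ'_ω(w)|. -/
theorem apollonian_distortion_bound (ω : List (ℕ × ℕ)) (hω : ∀ p ∈ ω, p ∈ apolI)
    (z w : ℂ) (hz : z ∈ unitD) (hw : w ∈ unitD) :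
    ‖deriv (wordComp ω) z‖ ≤ 5.900319 * ‖deriv (wordComp ω) w‖ := by
  obtain ⟨a,b,c,d, hM⟩ := word_mob ω hω
  have hUB : unitD ⊆ BB := Metric.closedBall_subset_closedBall (by norm_num)
  have hball : ∀ u ∈ unitD, Metric.ball (0:ℂ) (12/5) ∈ nhds u := by
    intro u hu
    apply Metric.isOpen_ball.mem_nhds
    rw [Metric.mem_ball]
    have : dist u (0:ℂ) ≤ 1 := by rwa [← Metric.mem_closedBall]
    linarith
  have hders : ∀ u ∈ unitD, deriv (wordComp ω) u = (a*d - b*c)/(c*u+d)^2 := by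
    intro u hu
    have hev : wordComp ω =ᶠ[nhds u] (fun v => (a*v+b)/(c*v+d)) :=
      Filter.eventuallyEq_of_mem (hball u hu)
        (fun v hv => (hM v (Metric.ball_subset_closedBall hv)).2.1)
    rw [hev.deriv_eq]
    exact deriv_mob a b c d u (hM u (hUB hu)).1
  rw [hders z hz, hders w hw]
  rcases eq_or_ne c 0 with hc | hc
  · subst hc
    simp only [zero_mul, mul_zero, zero_add, sub_zero]
    nlinarith [norm_nonneg (a*d/d^2)]
  · set r : ℂ := -d/c with hr
    have hcr : c*r + d = 0 := by rw [hr]; field_simp; ring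
    have hrB : (12/5:ℝ) < ‖r‖ := by
      by_contra hle
      push_neg at hle
      have hrBB : r ∈ BB := by
        rw [BB, Metric.mem_closedBall, Complex.dist_eq, sub_zero]; exact hle
      exact (hM r hrBB).1 hcr
    have hcr' : c*r = -d := by
      have := hcr; linear_combination this
    have hfac : ∀ u : ℂ, c*u + d = c*(u - r) := by
      intro u
      rw [mul_sub, hcr']; ring
    have hz1 : ‖z‖ ≤ 1 := by
      rw [unitD, Metric.mem_closedBall, Complex.dist_eq, sub_zero] at hz; exact hz
    have hw1 : ‖w‖ ≤ 1 := by
      rw [unitD, Metric.mem_closedBall, Complex.dist_eq, sub_zero] at hw; exact hw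
    have hs : ‖r‖ - 1 ≤ ‖z - r‖ := by
      have h1 : ‖r‖ - ‖z‖ ≤ ‖r - z‖ := norm_sub_norm_le r z
      rw [norm_sub_rev] at h1
      linarith
    have ht' : ‖r‖ - 1 ≤ ‖w - r‖ := by
      have h1 : ‖r‖ - ‖w‖ ≤ ‖r - w‖ := norm_sub_norm_le r w
      rw [norm_sub_rev] at h1
      linarith
    have ht : ‖w - r‖ ≤ 1 + ‖r‖ := by
      have h1 : ‖w - r‖ ≤ ‖w‖ + ‖r‖ := norm_sub_le w r
      linarith
    set s : ℝ := ‖z - r‖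
    set t : ℝ := ‖w - r‖
    set K : ℝ := ‖a*d - b*c‖
    set C : ℝ := ‖c‖
    have hC : 0 < C := norm_pos_iff.mpr hc
    have hspos : 0 < s := by linarith
    have htpos : 0 < t := by linarith
    have hK0 : 0 ≤ K := norm_nonneg _
    rw [hfac z, hfac w, norm_div, norm_div, norm_pow, norm_pow, norm_mul, norm_mul]
    rw [show (5.900319:ℝ) * (K/(C*t)^2) = (5.900319*K)/(C*t)^2 by ring]
    rw [div_le_div_iff₀ (pow_pos (mul_pos hC hspos) 2) (pow_pos (mul_pos hC htpos) 2)]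
    have h4 : (1 + ‖r‖)^2 ≤ (289/49)*(‖r‖ - 1)^2 := by nlinarith [hrB]
    have h1 : t^2 ≤ (289/49)*s^2 := by nlinarith [ht, hs, hrB, hspos, htpos]
    have h2 : K*(C^2*t^2) ≤ (289/49)*K*(C^2*s^2) := by nlinarith [mul_le_mul_of_nonneg_left h1 (mul_nonneg hK0 (sq_nonneg C))]
    nlinarith [h2, mul_nonneg hK0 (mul_nonneg (sq_nonneg C) (sq_nonneg s))]

end
end
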